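/- arXiv:1108.3227 — 4 statements merged into one kernel-verified Lean document; each statement's English description precedes it below -/
import Mathlib

section
/- Let 0 < r₁ < r₂ and let f : ℂ → ℂ be holomorphic on the open annulus {ζ : r₁ < |ζ| < r₂}. Then there exist a unique function f₊ holomorphic on the disc {ζ : |ζ| < r₂} with f₊(0) = 0, a unique constant c₀ ∈ ℂ, and a unique function f₋ holomorphic on {ζ : |ζ| > r₁} with f₋(ζ) → 0 as |ζ| → ∞, such that f(ζ) = f₊(ζ) + c₀ + f₋(ζ) for all ζ in the annulus. Moreover, for every ρ with r₁ < ρ < r₂, c₀ = (2πi)⁻¹ ∮_{|s|=ρ} f(s)/s ds (circle integral over the circle of radius ρ centered at 0). -/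
open Filter Complex Real Metric Set

noncomputable section
namespace AnnulusAux

variable {r₁ r₂ : ℝ} {f : ℂ → ℂ}

lemma isOpen_absGt (r : ℝ) : IsOpen {ζ : ℂ | r < ‖ζ‖} :=
  isOpen_lt continuous_const continuous_norm

lemma isOpen_absLt (r : ℝ) : IsOpen {ζ : ℂ | ‖ζ‖ < r} :=
  isOpen_lt continuous_norm continuous_const

lemma isOpen_ann (r₁ r₂ : ℝ) : IsOpen {ζ : ℂ | r₁ < ‖ζ‖ ∧ ‖ζ‖ < r₂} :=
  (isOpen_lt continuous_const continuous_norm).inter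
    (isOpen_lt continuous_norm continuous_const)

variable {r₁ r₂ : ℝ} {f : ℂ → ℂ}

/-- Radius independence of the Cauchy transform on the annulus. -/
lemma indep (hf : DifferentiableOn ℂ f {ζ : ℂ | r₁ < ‖ζ‖ ∧ ‖ζ‖ < r₂})
    {ζ : ℂ} {a b : ℝ} (ha : max r₁ (‖ζ‖) < a) (hab : a ≤ b) (hb : b < r₂) :
    (∮ s in C(0, b), (s - ζ)⁻¹ • f s) = ∮ s in C(0, a), (s - ζ)⁻¹ • f s := by
  have h0a : 0 < a := ((norm_nonneg ζ).trans (le_max_right _ _)).trans_lt ha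
  have hr₁a : r₁ < a := (le_max_left _ _).trans_lt ha
  have hζa : ‖ζ‖ < a := (le_max_right _ _).trans_lt ha
  have hsub : closedBall (0:ℂ) b \ ball 0 a ⊆ {ζ : ℂ | r₁ < ‖ζ‖ ∧ ‖ζ‖ < r₂} := by
    intro z hz
    simp only [mem_diff, mem_closedBall, mem_ball, dist_zero_right,
      not_lt] at hz
    exact ⟨hr₁a.trans_le hz.2, hz.1.trans_lt hb⟩
  have hne : ∀ z ∈ closedBall (0:ℂ) b \ ball 0 a, z - ζ ≠ 0 := by
    intro z hz
    simp only [mem_diff, mem_closedBall, mem_ball, dist_zero_right,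
      not_lt] at hz
    exact sub_ne_zero.2 fun h => absurd (h ▸ hz.2) (not_le.2 hζa)
  refine Complex.circleIntegral_eq_of_differentiable_on_annulus_off_countable h0a hab
    (s := ∅) countable_empty ?_ ?_
  · exact ((continuousOn_id.sub continuousOn_const).inv₀ hne).smul (hf.continuousOn.mono hsub)
  · intro z hz
    have hz' : z ∈ closedBall (0:ℂ) b \ ball 0 a := by
      rcases hz.1 with ⟨h1, h2⟩
      exact ⟨ball_subset_closedBall h1, fun h => h2 (ball_subset_closedBall h)⟩
    exact ((differentiableAt_id.sub_const ζ).inv (hne z hz')).smul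
      (hf.differentiableAt ((isOpen_ann r₁ r₂).mem_nhds (hsub hz')))

/-- The Cauchy transform with self-adapting radius. -/
def cInt (r₁ r₂ : ℝ) (f : ℂ → ℂ) (ζ : ℂ) : ℂ :=
  (2 * π * I : ℂ)⁻¹ • ∮ s in C(0, (max r₁ (‖ζ‖) + r₂) / 2), (s - ζ)⁻¹ • f s

lemma cInt_spec (hf : DifferentiableOn ℂ f {ζ : ℂ | r₁ < ‖ζ‖ ∧ ‖ζ‖ < r₂})
    {ζ : ℂ} {ρ : ℝ} (hρ₁ : max r₁ (‖ζ‖) < ρ) (hρ₂ : ρ < r₂) :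
    cInt r₁ r₂ f ζ = (2 * π * I : ℂ)⁻¹ • ∮ s in C(0, ρ), (s - ζ)⁻¹ • f s := by
  set ρ₀ := (max r₁ (‖ζ‖) + r₂) / 2 with hρ₀
  have h1 : max r₁ (‖ζ‖) < ρ₀ := by
    have := hρ₁.trans hρ₂
    simp only [hρ₀]; linarith
  have h2 : ρ₀ < r₂ := by
    have := hρ₁.trans hρ₂
    simp only [hρ₀]; linarith
  rcases le_total ρ ρ₀ with h | h
  · rw [cInt, indep hf hρ₁ h h2]
  · rw [cInt, ← indep hf h1 h hρ₂]

lemma cInt_diff (hr₁ : 0 < r₁) (hr : r₁ < r₂)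
    (hf : DifferentiableOn ℂ f {ζ : ℂ | r₁ < ‖ζ‖ ∧ ‖ζ‖ < r₂}) :
    DifferentiableOn ℂ (cInt r₁ r₂ f) {ζ : ℂ | ‖ζ‖ < r₂} := by
  intro ζ₀ hζ₀
  simp only [mem_setOf_eq] at hζ₀
  set ρ := (max r₁ (‖ζ₀‖) + r₂) / 2 with hρdef
  have hmax : max r₁ (‖ζ₀‖) < r₂ := max_lt hr hζ₀
  have h1 : max r₁ (‖ζ₀‖) < ρ := by simp only [hρdef]; linarith
  have h2 : ρ < r₂ := by simp only [hρdef]; linarith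
  have hρpos : 0 < ρ := (hr₁.trans_le (le_max_left _ _)).trans h1
  have hcirc : CircleIntegrable f 0 ρ := by
    refine (hf.continuousOn.mono ?_).circleIntegrable hρpos.le
    intro z hz
    simp only [mem_sphere_iff_norm, sub_zero] at hz
    exact ⟨hz ▸ (le_max_left _ _).trans_lt h1, hz ▸ h2⟩
  have hps := hasFPowerSeriesOn_cauchy_integral (R := ρ.toNNReal)
    (by rwa [Real.coe_toNNReal _ hρpos.le]) (by simpa using hρpos)
  have hFdiff := hps.differentiableOn
  have hρ' : (ρ.toNNReal : ℝ) = ρ := Real.coe_toNNReal _ hρpos.le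
  have hζρ : ‖ζ₀‖ < ρ := (le_max_right _ _).trans_lt h1
  have hmem : ζ₀ ∈ Metric.eball (0:ℂ) ρ.toNNReal := by
    rw [Metric.emetric_ball_nnreal, mem_ball, dist_zero_right, hρ']
    exact hζρ
  have hFat : DifferentiableAt ℂ
      (fun w => (2 * π * I : ℂ)⁻¹ • ∮ z in C(0, (ρ.toNNReal:ℝ)), (z - w)⁻¹ • f z) ζ₀ := by
    refine (hFdiff ζ₀ hmem).differentiableAt ?_
    rw [Metric.emetric_ball_nnreal]
    refine Metric.isOpen_ball.mem_nhds ?_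
    rw [mem_ball, dist_zero_right, hρ']
    exact hζρ
  have heq : cInt r₁ r₂ f =ᶠ[nhds ζ₀]
      fun w => (2 * π * I : ℂ)⁻¹ • ∮ z in C(0, (ρ.toNNReal:ℝ)), (z - w)⁻¹ • f z := by
    have hball : Metric.ball (0:ℂ) ρ ∈ nhds ζ₀ := Metric.isOpen_ball.mem_nhds (by
      rw [mem_ball, dist_zero_right]; exact hζρ)
    filter_upwards [hball] with w hw
    rw [mem_ball, dist_zero_right] at hw
    rw [hρ']
    exact cInt_spec hf (max_lt ((le_max_left _ _).trans_lt h1) hw) h2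
  exact (Filter.EventuallyEq.differentiableAt_iff heq).2 hFat |>.differentiableWithinAt

/-- Cauchy integral formula for an annulus. -/
lemma two_circle (hr₁ : 0 < r₁)
    (hf : DifferentiableOn ℂ f {ζ : ℂ | r₁ < ‖ζ‖ ∧ ‖ζ‖ < r₂})
    {ζ : ℂ} {ρ' ρ : ℝ} (h1 : r₁ < ρ') (h2 : ρ' < ‖ζ‖) (h3 : ‖ζ‖ < ρ)
    (h4 : ρ < r₂) :
    (∮ s in C(0, ρ), (s - ζ)⁻¹ • f s) - (∮ s in C(0, ρ'), (s - ζ)⁻¹ • f s)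
      = (2 * π * I : ℂ) • f ζ := by
  have hρ'0 : 0 < ρ' := hr₁.trans h1
  have hρ0 : 0 < ρ := hρ'0.trans (h2.trans h3)
  have hsub : closedBall (0:ℂ) ρ \ ball 0 ρ' ⊆
      {ζ : ℂ | r₁ < ‖ζ‖ ∧ ‖ζ‖ < r₂} := by
    intro z hz
    simp only [mem_diff, mem_closedBall, mem_ball, dist_zero_right,
      not_lt] at hz
    exact ⟨h1.trans_le hz.2, hz.1.trans_lt h4⟩
  have hζmem : ζ ∈ {ζ : ℂ | r₁ < ‖ζ‖ ∧ ‖ζ‖ < r₂} :=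
    ⟨h1.trans h2, h3.trans h4⟩
  have hfζ : DifferentiableAt ℂ f ζ := hf.differentiableAt ((isOpen_ann r₁ r₂).mem_nhds hζmem)
  -- Goursat for dslope f ζ on the annulus ρ' ≤ |z| ≤ ρ
  have key : (∮ s in C(0, ρ), dslope f ζ s) = ∮ s in C(0, ρ'), dslope f ζ s := by
    refine Complex.circleIntegral_eq_of_differentiable_on_annulus_off_countable hρ'0 (h2.trans h3).le
      (s := {ζ}) (countable_singleton ζ) ?_ ?_
    · intro z hz
      rcases eq_or_ne z ζ with rfl | hne
      · exact ((continuousAt_dslope_same).2 hfζ).continuousWithinAt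
      · exact ((continuousAt_dslope_of_ne hne).2
          ((hf.continuousOn.continuousAt ((isOpen_ann r₁ r₂).mem_nhds (hsub hz))))).continuousWithinAt
    · intro z hz
      have hne : z ≠ ζ := hz.2
      have hz' : z ∈ closedBall (0:ℂ) ρ \ ball 0 ρ' := by
        rcases hz.1 with ⟨ha, hb⟩
        exact ⟨ball_subset_closedBall ha, fun h => hb (ball_subset_closedBall h)⟩
      exact (differentiableAt_dslope_of_ne hne).2
        (hf.differentiableAt ((isOpen_ann r₁ r₂).mem_nhds (hsub hz')))
  -- rewrite dslope integrals
  have hexp : ∀ (τ : ℝ), 0 < τ → τ ≠ ‖ζ‖ → ContinuousOn f (sphere (0:ℂ) τ) →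
      (∮ s in C(0, τ), dslope f ζ s) =
        (∮ s in C(0, τ), (s - ζ)⁻¹ • f s) - (∮ s in C(0, τ), (s - ζ)⁻¹) • f ζ := by
    intro τ hτ hτζ hcont
    have hne : ∀ s ∈ sphere (0:ℂ) τ, s ≠ ζ := by
      intro s hs
      simp only [mem_sphere_iff_norm, sub_zero] at hs
      exact fun h => hτζ (by rw [← hs, h])
    have hsne : ∀ s ∈ sphere (0:ℂ) τ, s - ζ ≠ 0 := fun s hs => sub_ne_zero.2 (hne s hs)
    have e1 : (∮ s in C(0, τ), dslope f ζ s) =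
        ∮ s in C(0, τ), ((s - ζ)⁻¹ • f s - (s - ζ)⁻¹ • f ζ) := by
      refine circleIntegral.integral_congr hτ.le fun s hs => ?_
      rw [dslope_of_ne _ (hne s hs), slope_def_field]
      rw [div_eq_inv_mul]
      simp only [smul_eq_mul]
      ring
    rw [e1, circleIntegral.integral_sub, ← circleIntegral.integral_smul_const]
    · exact (((continuousOn_id.sub continuousOn_const).inv₀ hsne).smul hcont).circleIntegrable hτ.le
    · exact (((continuousOn_id.sub continuousOn_const).inv₀ hsne).smul
        continuousOn_const).circleIntegrable hτ.le
  have hco : ∀ (τ : ℝ), r₁ < τ → τ < r₂ → ContinuousOn f (sphere (0:ℂ) τ) := by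
    intro τ ha hb
    refine hf.continuousOn.mono fun z hz => ?_
    simp only [mem_sphere_iff_norm, sub_zero] at hz
    exact ⟨hz ▸ ha, hz ▸ hb⟩
  rw [hexp ρ hρ0 (h3.ne') (hco ρ (h1.trans (h2.trans h3)) h4),
      hexp ρ' hρ'0 h2.ne (hco ρ' h1 (h2.trans (h3.trans h4)))] at key
  have hin : (∮ s in C(0, ρ), (s - ζ)⁻¹) = 2 * π * I :=
    circleIntegral.integral_sub_inv_of_mem_ball (by
      rw [mem_ball, dist_zero_right]; exact h3)
  have hout : (∮ s in C(0, ρ'), (s - ζ)⁻¹) = 0 := by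
    have hne : ∀ z ∈ closedBall (0:ℂ) ρ', z - ζ ≠ 0 := by
      intro z hz
      rw [mem_closedBall, dist_zero_right] at hz
      exact sub_ne_zero.2 fun h => absurd (h ▸ hz) (not_le.2 h2)
    refine Complex.circleIntegral_eq_zero_of_differentiable_on_off_countable hρ'0.le
      (s := ∅) countable_empty ((continuousOn_id.sub continuousOn_const).inv₀ hne) ?_
    intro z hz
    exact (differentiableAt_id.sub_const ζ).inv (hne z (ball_subset_closedBall hz.1))
  rw [hin, hout, zero_smul, sub_zero] at key
  linear_combination key

lemma circleMap_inv (ρ' : ℝ) (hρ' : 0 < ρ') (θ : ℝ) :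
    (circleMap 0 ρ'⁻¹ θ)⁻¹ = circleMap 0 ρ' (-θ) := by
  simp only [circleMap, zero_add, mul_inv, ← Complex.exp_neg, Complex.ofReal_inv, inv_inv,
    Complex.ofReal_neg, neg_mul]

/-- Inversion identity for the inner Cauchy integral. -/
lemma inversion {ρ' : ℝ} (hρ' : 0 < ρ') {ζ : ℂ} (hζ : ρ' < ‖ζ‖) :
    (∮ t in C(0, ρ'⁻¹), ((t - ζ⁻¹)⁻¹ - t⁻¹) • f t⁻¹) = -∮ s in C(0, ρ'), (s - ζ)⁻¹ • f s := by
  have hζ0 : ζ ≠ 0 := by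
    intro h; rw [h] at hζ; simp at hζ; linarith
  set F : ℝ → ℂ := fun θ => circleMap 0 ρ' θ * I * ((circleMap 0 ρ' θ - ζ)⁻¹ * f (circleMap 0 ρ' θ))
    with hF
  have hRHS : (∮ s in C(0, ρ'), (s - ζ)⁻¹ • f s) = ∫ θ in (0:ℝ)..2 * π, F θ := by
    simp only [circleIntegral, deriv_circleMap, smul_eq_mul, hF]
  have hptwise : ∀ θ : ℝ, deriv (circleMap 0 ρ'⁻¹) θ •
      ((circleMap 0 ρ'⁻¹ θ - ζ⁻¹)⁻¹ - (circleMap 0 ρ'⁻¹ θ)⁻¹) • f ((circleMap 0 ρ'⁻¹ θ))⁻¹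
        = -F (-θ) := by
    intro θ
    have hci := circleMap_inv ρ' hρ' θ
    set s := circleMap 0 ρ' (-θ) with hs
    have hsabs : ‖s‖ = ρ' := by
      rw [hs, norm_circleMap_zero, abs_of_pos hρ']
    have hs0 : s ≠ 0 := by
      intro h; rw [h] at hsabs; simp at hsabs; linarith
    have hc0 : circleMap 0 ρ'⁻¹ θ = s⁻¹ := by rw [← hci, inv_inv]
    have hsζ : s - ζ ≠ 0 := sub_ne_zero.2 fun h => by rw [h] at hsabs; exact hζ.ne' hsabs
    have hζs : -s + ζ ≠ 0 := fun h => hsζ (by linear_combination -h)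
    have hne : s⁻¹ - ζ⁻¹ ≠ 0 := sub_ne_zero.2 fun h => hsζ (sub_eq_zero.2 (inv_injective h))
    rw [deriv_circleMap, hc0, inv_inv, hF]
    simp only [smul_eq_mul]
    clear_value s
    rw [← hs]
    have hzs : ζ - s ≠ 0 := fun h => hsζ (by linear_combination -h)
    have hzs' : -ζ + s ≠ 0 := fun h => hsζ (by linear_combination h)
    field_simp
    ring
  have hLHS : (∮ t in C(0, ρ'⁻¹), ((t - ζ⁻¹)⁻¹ - t⁻¹) • f t⁻¹)
      = ∫ θ in (0:ℝ)..2 * π, -F (-θ) := by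
    simp only [circleIntegral]
    exact intervalIntegral.integral_congr fun θ _ => hptwise θ
  have hper : Function.Periodic F (2 * π) := by
    intro θ
    simp only [hF, periodic_circleMap 0 ρ' θ]
  have hshift : (∫ θ in (-(2 * π):ℝ)..0, F θ) = ∫ θ in (0:ℝ)..2 * π, F θ := by
    have := hper.intervalIntegral_add_eq (-(2 * π)) 0
    simpa using this
  rw [hLHS, hRHS, intervalIntegral.integral_neg]
  congr 1
  rw [intervalIntegral.integral_comp_neg fun θ => F θ]
  rw [neg_zero, ← hshift]


end AnnulusAux
end

open AnnulusAux

/-- `IsAnnulusDecomp r₁ r₂ f fp c₀ fm` says that `fp + c₀ + fm` is a decomposition of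
`f` on the annulus `{ζ : r₁ < |ζ| < r₂}` into a part `fp` holomorphic on the disc
`{|ζ| < r₂}` vanishing at `0`, a constant `c₀`, and a part `fm` holomorphic on
`{r₁ < |ζ|}` tending to `0` as `|ζ| → ∞`. -/
def IsAnnulusDecomp (r₁ r₂ : ℝ) (f fp : ℂ → ℂ) (c₀ : ℂ) (fm : ℂ → ℂ) : Prop :=
  DifferentiableOn ℂ fp {ζ : ℂ | ‖ζ‖ < r₂} ∧ fp 0 = 0 ∧
  DifferentiableOn ℂ fm {ζ : ℂ | r₁ < ‖ζ‖} ∧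
  Tendsto fm (Filter.comap (fun ζ : ℂ => ‖ζ‖) Filter.atTop) (nhds 0) ∧
  ∀ ζ : ℂ, r₁ < ‖ζ‖ → ‖ζ‖ < r₂ → f ζ = fp ζ + c₀ + fm ζ

/-- Decomposition of a holomorphic function on an annulus into a part holomorphic inside
the outer boundary vanishing at the origin, a constant term, and a part holomorphic
outside the inner boundary vanishing at infinity; the decomposition is unique, and the
constant term is given by the Cauchy integral `(2πi)⁻¹ ∮_{|s|=ρ} f(s)/s ds` for every
intermediate radius `ρ`. -/
theorem annulus_laurent_decomposition
    (r₁ r₂ : ℝ) (hr₁ : 0 < r₁) (hr : r₁ < r₂) (f : ℂ → ℂ)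
    (hf : DifferentiableOn ℂ f {ζ : ℂ | r₁ < ‖ζ‖ ∧ ‖ζ‖ < r₂}) :
    (∃ (fp : ℂ → ℂ) (c₀ : ℂ) (fm : ℂ → ℂ),
      IsAnnulusDecomp r₁ r₂ f fp c₀ fm ∧
      ∀ ρ : ℝ, r₁ < ρ → ρ < r₂ →
        c₀ = (2 * Real.pi * Complex.I)⁻¹ * (∮ s in C(0, ρ), f s / s)) ∧
    (∀ (fp fp' : ℂ → ℂ) (c₀ c₀' : ℂ) (fm fm' : ℂ → ℂ),
      IsAnnulusDecomp r₁ r₂ f fp c₀ fm → IsAnnulusDecomp r₁ r₂ f fp' c₀' fm' →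
      (∀ ζ : ℂ, ‖ζ‖ < r₂ → fp ζ = fp' ζ) ∧ c₀ = c₀' ∧
      (∀ ζ : ℂ, r₁ < ‖ζ‖ → fm ζ = fm' ζ)) := by
  have hr₂ : 0 < r₂ := hr₁.trans hr
  constructor
  · -- existence
    set g : ℂ → ℂ := fun t => f t⁻¹ with hgdef
    have hg : DifferentiableOn ℂ g {t : ℂ | r₂⁻¹ < ‖t‖ ∧ ‖t‖ < r₁⁻¹} := by
      intro t ht
      simp only [mem_setOf_eq] at ht
      have htpos : 0 < ‖t‖ := (inv_pos.2 hr₂).trans ht.1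
      have ht0 : t ≠ 0 := norm_pos_iff.mp htpos
      have hmem : t⁻¹ ∈ {ζ : ℂ | r₁ < ‖ζ‖ ∧ ‖ζ‖ < r₂} := by
        rw [mem_setOf_eq, norm_inv]
        constructor
        · calc r₁ = (r₁⁻¹)⁻¹ := (inv_inv r₁).symm
            _ < (‖t‖)⁻¹ := inv_strictAnti₀ htpos ht.2
        · calc (‖t‖)⁻¹ < (r₂⁻¹)⁻¹ := inv_strictAnti₀ (inv_pos.2 hr₂) ht.1
            _ = r₂ := inv_inv r₂
      exact ((hf.differentiableAt ((isOpen_ann r₁ r₂).mem_nhds hmem)).comp t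
        (differentiableAt_id.inv ht0)).differentiableWithinAt
    have hinv : 0 < r₂⁻¹ ∧ r₂⁻¹ < r₁⁻¹ := ⟨inv_pos.2 hr₂, inv_strictAnti₀ hr₁ hr⟩
    set G : ℂ → ℂ := cInt r₂⁻¹ r₁⁻¹ g with hGdef
    have hGdiff : DifferentiableOn ℂ G {w : ℂ | ‖w‖ < r₁⁻¹} :=
      cInt_diff hinv.1 hinv.2 hg
    refine ⟨fun ζ => cInt r₁ r₂ f ζ - cInt r₁ r₂ f 0, cInt r₁ r₂ f 0,
      fun ζ => G ζ⁻¹ - G 0, ⟨?_, by simp, ?_, ?_, ?_⟩, ?_⟩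
    · exact (cInt_diff hr₁ hr hf).sub (differentiableOn_const _)
    · -- fm differentiable
      intro ζ hζ
      simp only [mem_setOf_eq] at hζ
      have hζ0 : ζ ≠ 0 := norm_pos_iff.mp (hr₁.trans hζ)
      have hmem : ζ⁻¹ ∈ {w : ℂ | ‖w‖ < r₁⁻¹} := by
        rw [mem_setOf_eq, norm_inv]
        exact inv_strictAnti₀ hr₁ hζ
      have : DifferentiableAt ℂ (fun ζ : ℂ => G ζ⁻¹) ζ :=
        (hGdiff.differentiableAt ((isOpen_absLt r₁⁻¹).mem_nhds hmem)).comp ζ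
          (differentiableAt_id.inv hζ0)
      exact (this.sub_const _).differentiableWithinAt
    · -- tendsto 0 at infinity
      have h1 : Tendsto (fun ζ : ℂ => ζ⁻¹) (Filter.comap (fun ζ : ℂ => ‖ζ‖) Filter.atTop) (nhds 0) := by
        rw [tendsto_zero_iff_norm_tendsto_zero]
        simp only [norm_inv]
        exact tendsto_inv_atTop_zero.comp tendsto_comap
      have hGcont : ContinuousAt G 0 :=
        (hGdiff.differentiableAt ((isOpen_absLt r₁⁻¹).mem_nhds (by
          simp [mem_setOf_eq, inv_pos.2 hr₁]))).continuousAt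
      have h2 : Tendsto (fun ζ : ℂ => G ζ⁻¹) (Filter.comap (fun ζ : ℂ => ‖ζ‖) Filter.atTop)
          (nhds (G 0)) := hGcont.tendsto.comp h1
      simpa using h2.sub (tendsto_const_nhds (x := G 0))
    · -- the decomposition identity
      intro ζ hζ1 hζ2
      set ρ : ℝ := (‖ζ‖ + r₂) / 2 with hρdef
      set ρ' : ℝ := (r₁ + ‖ζ‖) / 2 with hρ'def
      have hρa : ‖ζ‖ < ρ := by simp only [hρdef]; linarith
      have hρb : ρ < r₂ := by simp only [hρdef]; linarith
      have hρ'a : r₁ < ρ' := by simp only [hρ'def]; linarith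
      have hρ'b : ρ' < ‖ζ‖ := by simp only [hρ'def]; linarith
      have hρ'0 : 0 < ρ' := hr₁.trans hρ'a
      have hζabs : 0 < ‖ζ‖ := hr₁.trans hζ1
      have hζ0 : ζ ≠ 0 := norm_pos_iff.mp hζabs
      -- outer representation
      have e1 : cInt r₁ r₂ f ζ = (2 * π * I : ℂ)⁻¹ • ∮ s in C(0, ρ), (s - ζ)⁻¹ • f s :=
        cInt_spec hf (max_lt (hζ1.trans hρa) hρa) hρb
      -- inner representations via inversion
      have e3 : G ζ⁻¹ = (2 * π * I : ℂ)⁻¹ • ∮ t in C(0, ρ'⁻¹), (t - ζ⁻¹)⁻¹ • g t := by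
        refine cInt_spec hg (max_lt (inv_strictAnti₀ hρ'0 (hρ'b.trans hζ2)) ?_)
          (inv_strictAnti₀ hr₁ hρ'a)
        rw [norm_inv]
        exact inv_strictAnti₀ hρ'0 hρ'b
      have e4 : G 0 = (2 * π * I : ℂ)⁻¹ • ∮ t in C(0, ρ'⁻¹), (t - 0)⁻¹ • g t := by
        refine cInt_spec hg ?_ (inv_strictAnti₀ hr₁ hρ'a)
        simp only [norm_zero]
        exact max_lt (inv_strictAnti₀ hρ'0 (hρ'b.trans hζ2)) (inv_pos.2 hρ'0)
      have hconts : ContinuousOn f (sphere (0:ℂ) ρ') := by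
        refine hf.continuousOn.mono fun z hz => ?_
        simp only [mem_sphere_iff_norm, sub_zero] at hz
        exact ⟨hz ▸ hρ'a, hz ▸ (hρ'b.trans hζ2)⟩
      have hBinv := inversion (f := f) hρ'0 hρ'b
      -- split the LHS of hBinv
      have hsphere : ∀ t ∈ sphere (0:ℂ) ρ'⁻¹, ‖t‖ = ρ'⁻¹ := by
        intro t ht
        simpa [mem_sphere_iff_norm] using ht
      have ht0 : ∀ t ∈ sphere (0:ℂ) ρ'⁻¹, t ≠ 0 := by
        intro t ht
        have h1 := hsphere t ht
        exact norm_pos_iff.mp (h1 ▸ inv_pos.2 hρ'0)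
      have htζ : ∀ t ∈ sphere (0:ℂ) ρ'⁻¹, t - ζ⁻¹ ≠ 0 := by
        intro t ht h
        have h1 := hsphere t ht
        rw [sub_eq_zero] at h
        rw [h, norm_inv] at h1
        have : ‖ζ‖ = ρ' := by
          field_simp at h1
          linarith [h1]
        exact hρ'b.ne' this
      have hmapsto : MapsTo (fun t : ℂ => t⁻¹) (sphere (0:ℂ) ρ'⁻¹) (sphere (0:ℂ) ρ') := by
        intro t ht
        have h1 := hsphere t ht
        simp only [mem_sphere_iff_norm, sub_zero, norm_inv, h1, inv_inv]
      have hgcont : ContinuousOn g (sphere (0:ℂ) ρ'⁻¹) :=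
        hconts.comp (continuousOn_id.inv₀ ht0) hmapsto
      have hsplit : (∮ t in C(0, ρ'⁻¹), ((t - ζ⁻¹)⁻¹ - t⁻¹) • g t)
          = (∮ t in C(0, ρ'⁻¹), (t - ζ⁻¹)⁻¹ • g t) - ∮ t in C(0, ρ'⁻¹), (t - 0)⁻¹ • g t := by
        have hcongr : (∮ t in C(0, ρ'⁻¹), ((t - ζ⁻¹)⁻¹ - t⁻¹) • g t)
            = ∮ t in C(0, ρ'⁻¹), ((t - ζ⁻¹)⁻¹ • g t - (t - 0)⁻¹ • g t) := by
          refine circleIntegral.integral_congr (inv_pos.2 hρ'0).le fun t ht => ?_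
          rw [sub_zero, sub_smul]
        rw [hcongr]
        refine circleIntegral.integral_sub ?_ ?_
        · exact (((continuousOn_id.sub continuousOn_const).inv₀ htζ).smul hgcont).circleIntegrable
            (inv_pos.2 hρ'0).le
        · refine (((continuousOn_id.sub continuousOn_const).inv₀ ?_).smul hgcont).circleIntegrable
            (inv_pos.2 hρ'0).le
          intro t ht
          simp only [Pi.sub_apply, id_eq, sub_zero]
          exact ht0 t ht
      have hA := two_circle hr₁ hf hρ'a hρ'b hρa hρb
      -- assemble
      simp only [smul_eq_mul] at e1 e3 e4 hA hBinv hsplit ⊢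
      rw [e1, e3, e4]
      rw [hsplit] at hBinv
      linear_combination (-(2 * (π:ℂ) * I)⁻¹) * hA + (-(2 * (π:ℂ) * I)⁻¹) * hBinv +
        (-(f ζ)) * (mul_inv_cancel₀ Complex.two_pi_I_ne_zero)
    · -- the c₀ formula
      intro ρ hρ1 hρ2
      have hρ0 : 0 < ρ := hr₁.trans hρ1
      have := cInt_spec hf (ζ := 0) (ρ := ρ) (by simpa using max_lt hρ1 hρ0) hρ2
      rw [this, smul_eq_mul]
      congr 1
      refine circleIntegral.integral_congr hρ0.le fun s _ => ?_
      rw [sub_zero, smul_eq_mul, div_eq_mul_inv, mul_comm]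
  · -- uniqueness
    rintro fp fp' c₀ c₀' fm fm' ⟨hfp, hfp0, hfm, hfmt, heq⟩ ⟨hfp', hfp0', hfm', hfmt', heq'⟩
    set u : ℂ → ℂ := fun ζ => fp ζ - fp' ζ + (c₀ - c₀') with hudef
    set v : ℂ → ℂ := fun ζ => fm' ζ - fm ζ with hvdef
    have huv : ∀ ζ : ℂ, r₁ < ‖ζ‖ → ‖ζ‖ < r₂ → u ζ = v ζ := by
      intro ζ h1 h2
      have := (heq ζ h1 h2).symm.trans (heq' ζ h1 h2)
      simp only [hudef, hvdef]
      linear_combination this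
    set H : ℂ → ℂ := fun ζ => if ‖ζ‖ < r₂ then u ζ else v ζ with hHdef
    have hHu : ∀ ζ : ℂ, ‖ζ‖ < r₂ → H ζ = u ζ := fun ζ h => if_pos h
    have hHv : ∀ ζ : ℂ, r₁ < ‖ζ‖ → H ζ = v ζ := by
      intro ζ h1
      by_cases h2 : ‖ζ‖ < r₂
      · rw [hHu ζ h2]; exact huv ζ h1 h2
      · exact if_neg h2
    have hHdiff : Differentiable ℂ H := by
      intro ζ
      by_cases h2 : ‖ζ‖ < r₂
      · have hu : DifferentiableAt ℂ u ζ := by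
          refine DifferentiableAt.add_const _ ?_
          exact ((hfp.differentiableAt ((isOpen_absLt r₂).mem_nhds h2)).sub
            (hfp'.differentiableAt ((isOpen_absLt r₂).mem_nhds h2)))
        refine hu.congr_of_eventuallyEq ?_
        filter_upwards [(isOpen_absLt r₂).mem_nhds h2] with w hw
        exact hHu w hw
      · have h1 : r₁ < ‖ζ‖ := hr.trans_le (not_lt.1 h2)
        have hv : DifferentiableAt ℂ v ζ :=
          (hfm'.differentiableAt ((isOpen_absGt r₁).mem_nhds h1)).sub
            (hfm.differentiableAt ((isOpen_absGt r₁).mem_nhds h1))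
        refine hv.congr_of_eventuallyEq ?_
        filter_upwards [(isOpen_absGt r₁).mem_nhds h1] with w hw
        exact hHv w hw
    have hHtend : Tendsto H (Filter.comap (fun ζ : ℂ => ‖ζ‖) Filter.atTop) (nhds 0) := by
      have hv : Tendsto v (Filter.comap (fun ζ : ℂ => ‖ζ‖) Filter.atTop) (nhds 0) := by
        simpa using hfmt'.sub hfmt
      refine hv.congr' ?_
      have hmem : {ζ : ℂ | r₁ < ‖ζ‖} ∈ Filter.comap (fun ζ : ℂ => ‖ζ‖) Filter.atTop :=
        Filter.preimage_mem_comap (Ioi_mem_atTop r₁)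
      filter_upwards [hmem] with ζ hζ
      exact (hHv ζ hζ).symm
    have hHcoc : Tendsto H (cocompact ℂ) (nhds 0) :=
      hHtend.mono_left (Filter.tendsto_iff_comap.1 tendsto_norm_cocompact_atTop)
    have hH0 : ∀ ζ : ℂ, H ζ = 0 := fun ζ => hHdiff.apply_eq_of_tendsto_cocompact ζ hHcoc
    have hu0 : ∀ ζ : ℂ, ‖ζ‖ < r₂ → u ζ = 0 := fun ζ h => (hHu ζ h).symm.trans (hH0 ζ)
    have hcc : c₀ = c₀' := by
      have := hu0 0 (by simpa using hr₂)
      simp only [hudef, hfp0, hfp0'] at this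
      linear_combination this
    refine ⟨?_, hcc, ?_⟩
    · intro ζ h
      have := hu0 ζ h
      simp only [hudef, hcc] at this
      linear_combination this
    · intro ζ h
      have := (hHv ζ h).symm.trans (hH0 ζ)
      simp only [hvdef] at this
      linear_combination -this
end

section
/- Let c, c' > 0, 0 < ρ₁ < ρ₂ < 1, M > 0, and let (tₙ) be a sequence of nonzero complex numbers with tₙ → 0 and |tₙ| < cc'ρ₁² for all n. For each n let fₙ : ℂ → ℂ be holomorphic on the annulus Aₙ = {ζ : |tₙ|/c' < |ζ| < c} and suppose |fₙ(ζ)| ≤ M whenever ρ₁c ≤ |ζ| ≤ ρ₂c and whenever |tₙ|/(c'ρ₂) ≤ |ζ| ≤ |tₙ|/(c'ρ₁). Then there exist a strictly increasing sequence of indices (n_k), a function g holomorphic on the disc {z : |z| < ρ₂c}, and a function h holomorphic on the disc {w : |w| < ρ₂c'}, such that: (i) the functions z ↦ f_{n_k}(z) converge to g uniformly on compact subsets of the punctured disc {z : 0 < |z| < ρ₂c}; (ii) the functions w ↦ f_{n_k}(t_{n_k}/w) converge to h uniformly on compact subsets of the punctured disc {w : 0 < |w| < ρ₂c'}; and (iii)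 g(0) = h(0). -/
open Filter

section NFauxSection

open Filter Metric Set Topology
namespace NFaux


/-- Maximum modulus on a closed annulus from bounds on the two boundary circles. -/
lemma maxmod {F : ℂ → ℂ} {r R M : ℝ} (hr : 0 < r) (hrR : r < R)
    (hd : ∀ ζ : ℂ, r ≤ ‖ζ‖ → ‖ζ‖ ≤ R → DifferentiableAt ℂ F ζ)
    (hbr : ∀ ζ : ℂ, ‖ζ‖ = r → ‖F ζ‖ ≤ M)
    (hbR : ∀ ζ : ℂ, ‖ζ‖ = R → ‖F ζ‖ ≤ M) :
    ∀ ζ : ℂ, r ≤ ‖ζ‖ → ‖ζ‖ ≤ R → ‖F ζ‖ ≤ M := by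
  have hR : 0 < R := hr.trans hrR
  intro ζ h1 h2
  rcases eq_or_lt_of_le h1 with h1' | h1'
  · exact hbr ζ h1'.symm
  rcases eq_or_lt_of_le h2 with h2' | h2'
  · exact hbR ζ h2'
  set s : Set ℂ := ball 0 R \ closedBall 0 r with hs
  have hclos : closure s ⊆ {ξ : ℂ | r ≤ ‖ξ‖ ∧ ‖ξ‖ ≤ R} := by
    have hsub : closure s ⊆ closure (ball (0:ℂ) R) ∩ closure ((closedBall (0:ℂ) r)ᶜ) := by
      refine (closure_mono (fun x hx => ?_)).trans (closure_inter_subset_inter_closure _ _)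
      exact ⟨hx.1, hx.2⟩
    intro x hx
    rcases hsub hx with ⟨hx1, hx2⟩
    rw [closure_ball (0:ℂ) hR.ne'] at hx1
    rw [closure_compl, interior_closedBall (0:ℂ) hr.ne'] at hx2
    exact ⟨not_lt.1 (fun h => hx2 (mem_ball_zero_iff.2 h)), mem_closedBall_zero_iff.1 hx1⟩
  have hfront : frontier s ⊆ sphere (0:ℂ) R ∪ sphere (0:ℂ) r := by
    intro x hx
    have := frontier_inter_subset (ball (0:ℂ) R) ((closedBall (0:ℂ) r)ᶜ) hx
    rcases this with h | h
    · left
      have := h.1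
      rwa [frontier_ball (0:ℂ) hR.ne'] at this
    · right
      have := h.2
      rwa [frontier_compl, frontier_closedBall (0:ℂ) hr.ne'] at this
  have hdc : DiffContOnCl ℂ F s := by
    constructor
    · intro x hx
      have hx1 : r ≤ ‖x‖ := le_of_lt (not_le.1 (fun h => hx.2 (mem_closedBall_zero_iff.2 h)))
      have hx2 : ‖x‖ ≤ R := (mem_ball_zero_iff.1 hx.1).le
      exact (hd x hx1 hx2).differentiableWithinAt
    · intro x hx
      rcases hclos hx with ⟨hx1, hx2⟩
      exact (hd x hx1 hx2).continuousAt.continuousWithinAt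
  have hbound : ∀ ξ ∈ frontier s, ‖F ξ‖ ≤ M := by
    intro ξ hξ
    rcases hfront hξ with h | h
    · exact hbR ξ (mem_sphere_zero_iff_norm.1 h)
    · exact hbr ξ (mem_sphere_zero_iff_norm.1 h)
  have hζs : ζ ∈ s :=
    ⟨mem_ball_zero_iff.2 h2', fun hmem => absurd (mem_closedBall_zero_iff.1 hmem) (not_le.2 h1')⟩
  exact Complex.norm_le_of_forall_mem_frontier_norm_le
    ((isBounded_ball).subset diff_subset) hdc hbound (subset_closure hζs)

/-- Cauchy splitting on an annulus. -/
lemma split {F : ℂ → ℂ} {r R : ℝ} (hr : 0 < r) (hrR : r < R) {U : Set ℂ} (hU : IsOpen U)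
    (hsub : ∀ ζ : ℂ, r ≤ ‖ζ‖ → ‖ζ‖ ≤ R → ζ ∈ U) (hF : DifferentiableOn ℂ F U)
    {z : ℂ} (hz1 : r < ‖z‖) (hz2 : ‖z‖ < R) :
    (∮ ζ in C(0, R), (ζ - z)⁻¹ • F ζ) - (∮ ζ in C(0, r), (ζ - z)⁻¹ • F ζ)
      = (2 * Real.pi * Complex.I) * F z := by
  have hzU : z ∈ U := hsub z hz1.le hz2.le
  have hdslope : DifferentiableOn ℂ (dslope F z) U :=
    (Complex.differentiableOn_dslope (hU.mem_nhds hzU)).mpr hF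
  have heq : (∮ ζ in C(0, R), dslope F z ζ) = ∮ ζ in C(0, r), dslope F z ζ := by
    refine Complex.circleIntegral_eq_of_differentiable_on_annulus_off_countable hr hrR.le
      countable_empty ?_ ?_
    · refine hdslope.continuousOn.mono (fun x hx => ?_)
      exact hsub x (not_lt.1 (fun h => hx.2 (mem_ball_zero_iff.2 h)))
        (mem_closedBall_zero_iff.1 hx.1)
    · intro x hx
      refine hdslope.differentiableAt (hU.mem_nhds (hsub x
        (le_of_lt (not_le.1 (fun h => hx.1.2 (mem_closedBall_zero_iff.2 h))))
        (mem_ball_zero_iff.1 hx.1.1).le))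
  have comp : ∀ ρ : ℝ, 0 < ρ → (∀ ξ : ℂ, ‖ξ‖ = ρ → ξ ∈ U) → z ∉ sphere (0:ℂ) ρ →
      (∮ ζ in C(0, ρ), dslope F z ζ)
        = (∮ ζ in C(0, ρ), (ζ - z)⁻¹ • F ζ) - F z * (∮ ζ in C(0, ρ), (ζ - z)⁻¹) := by
    intro ρ hρ hmem hzs
    have hFc : ContinuousOn F (sphere (0:ℂ) ρ) :=
      hF.continuousOn.mono (fun ξ hξ => hmem ξ (mem_sphere_zero_iff_norm.1 hξ))
    have hne : ∀ ξ ∈ sphere (0:ℂ) ρ, ξ - z ≠ 0 :=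
      fun ξ hξ => sub_ne_zero.2 (ne_of_mem_of_not_mem hξ hzs)
    have hinv : ContinuousOn (fun ζ : ℂ => (ζ - z)⁻¹) (sphere (0:ℂ) ρ) :=
      ((continuous_id.sub continuous_const).continuousOn).inv₀ hne
    have h1 : CircleIntegrable (fun ζ : ℂ => (ζ - z)⁻¹ • F ζ) 0 ρ :=
      (hinv.smul hFc).circleIntegrable hρ.le
    have h2 : CircleIntegrable (fun ζ : ℂ => F z * (ζ - z)⁻¹) 0 ρ :=
      (continuousOn_const.mul hinv).circleIntegrable hρ.le
    calc (∮ ζ in C(0, ρ), dslope F z ζ)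
        = ∮ ζ in C(0, ρ), ((ζ - z)⁻¹ • F ζ - F z * (ζ - z)⁻¹) := by
          refine circleIntegral.integral_congr hρ.le (fun ξ hξ => ?_)
          rw [dslope_of_ne F (ne_of_mem_of_not_mem hξ hzs), slope_def_field,
            div_eq_inv_mul, smul_eq_mul, mul_sub]
          ring
      _ = (∮ ζ in C(0, ρ), (ζ - z)⁻¹ • F ζ) - ∮ ζ in C(0, ρ), F z * (ζ - z)⁻¹ :=
          circleIntegral.integral_sub h1 h2
      _ = (∮ ζ in C(0, ρ), (ζ - z)⁻¹ • F ζ) - F z * (∮ ζ in C(0, ρ), (ζ - z)⁻¹) := by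
          rw [circleIntegral.integral_const_mul]
  have houter : (∮ ζ in C(0, R), (ζ - z)⁻¹) = 2 * Real.pi * Complex.I :=
    circleIntegral.integral_sub_inv_of_mem_ball (mem_ball_zero_iff.2 hz2)
  have hinner : (∮ ζ in C(0, r), (ζ - z)⁻¹) = 0 := by
    refine Complex.circleIntegral_eq_zero_of_differentiable_on_off_countable hr.le
      countable_empty ?_ ?_
    · intro ξ hξ
      have hne : ξ - z ≠ 0 :=
        sub_ne_zero.2 (fun he => absurd ((he ▸ mem_closedBall_zero_iff.1 hξ).trans_lt hz1) (lt_irrefl _))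
      have hdd : DifferentiableAt ℂ (fun ζ : ℂ => (ζ - z)⁻¹) ξ :=
        (differentiableAt_id.sub_const z).inv hne
      exact hdd.continuousAt.continuousWithinAt
    · intro ξ hξ
      have hne : ξ - z ≠ 0 :=
        sub_ne_zero.2 (fun he => absurd ((he ▸ (mem_ball_zero_iff.1 hξ.1).le).trans_lt hz1) (lt_irrefl _))
      have hdd : DifferentiableAt ℂ (fun ζ : ℂ => (ζ - z)⁻¹) ξ :=
        (differentiableAt_id.sub_const z).inv hne
      exact hdd
  have hcompR := comp R (hr.trans hrR) (fun ξ hξ => hsub ξ (le_of_le_of_eq hrR.le hξ.symm) hξ.le)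
    (fun hzs => absurd (mem_sphere_zero_iff_norm.1 hzs) hz2.ne)
  have hcompr := comp r hr (fun ξ hξ => hsub ξ hξ.ge (hξ.le.trans hrR.le))
    (fun hzs => absurd (mem_sphere_zero_iff_norm.1 hzs) hz1.ne')
  rw [houter] at hcompR
  rw [hinner, mul_zero] at hcompr
  have : (∮ ζ in C(0, R), (ζ - z)⁻¹ • F ζ) - (∮ ζ in C(0, r), (ζ - z)⁻¹ • F ζ)
      = ((∮ ζ in C(0, R), dslope F z ζ) - ∮ ζ in C(0, r), dslope F z ζ)
        + 2 * Real.pi * Complex.I * F z := by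
    rw [hcompR, hcompr]; ring
  rw [this, heq, sub_self, zero_add]



noncomputable def coefA (F : ℂ → ℂ) (R : ℝ) (m : ℕ) : ℂ :=
  (2 * Real.pi * Complex.I : ℂ)⁻¹ • ∮ ζ in C(0, R), (ζ - 0)⁻¹ ^ m • (ζ - 0)⁻¹ • F ζ

lemma coefA_eq (F : ℂ → ℂ) (R : ℝ) (m : ℕ) :
    cauchyPowerSeries F 0 R m = ContinuousMultilinearMap.mkPiRing ℂ (Fin m) (coefA F R m) := rfl

lemma norm_coefA_le {F : ℂ → ℂ} {R M : ℝ} (hR : 0 < R) (hM : 0 ≤ M)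
    (hb : ∀ ζ : ℂ, ‖ζ‖ = R → ‖F ζ‖ ≤ M) (m : ℕ) :
    ‖coefA F R m‖ ≤ M / R ^ m := by
  have h1 : ‖coefA F R m‖ = ‖cauchyPowerSeries F 0 R m‖ := by
    rw [coefA_eq, ContinuousMultilinearMap.norm_mkPiRing]
  have h2 := norm_cauchyPowerSeries_le F 0 R m
  have hint : (∫ θ : ℝ in (0)..2 * Real.pi, ‖F (circleMap 0 R θ)‖) ≤ M * (2 * Real.pi) := by
    have := intervalIntegral.norm_integral_le_of_norm_le_const
      (C := M) (f := fun θ : ℝ => ‖F (circleMap 0 R θ)‖) (a := 0) (b := 2 * Real.pi) ?_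
    · calc (∫ θ : ℝ in (0)..2 * Real.pi, ‖F (circleMap 0 R θ)‖)
          ≤ ‖∫ θ : ℝ in (0)..2 * Real.pi, ‖F (circleMap 0 R θ)‖‖ := le_abs_self _
        _ ≤ M * |2 * Real.pi - 0| := this
        _ = M * (2 * Real.pi) := by
            rw [sub_zero, abs_of_pos Real.two_pi_pos]
    · intro x _
      rw [Real.norm_eq_abs, abs_norm]
      exact hb _ (by simp [abs_of_pos hR])
  rw [h1]
  refine h2.trans ?_
  have hpos : (0:ℝ) ≤ |R|⁻¹ ^ m := by positivity
  have : (2 * Real.pi)⁻¹ * (∫ θ : ℝ in (0)..2 * Real.pi, ‖F (circleMap 0 R θ)‖) ≤ M := by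
    rw [inv_mul_le_iff₀ Real.two_pi_pos, mul_comm (2 * Real.pi)]
    exact hint
  calc (2 * Real.pi)⁻¹ * (∫ θ : ℝ in (0)..2 * Real.pi, ‖F (circleMap 0 R θ)‖) * |R|⁻¹ ^ m
      ≤ M * |R|⁻¹ ^ m := mul_le_mul_of_nonneg_right this hpos
    _ = M / R ^ m := by
        rw [abs_of_pos hR, inv_pow, div_eq_mul_inv]

lemma cInt_eq_tsum {F : ℂ → ℂ} {R : ℝ} (hR : 0 < R)
    (hcont : ContinuousOn F (sphere 0 R)) {z : ℂ} (hz : ‖z‖ < R) :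
    (2 * Real.pi * Complex.I : ℂ)⁻¹ • (∮ ζ in C(0, R), (ζ - z)⁻¹ • F ζ)
      = ∑' m : ℕ, z ^ m * coefA F R m := by
  have hci : CircleIntegrable F 0 R := hcont.circleIntegrable hR.le
  have hz' : ‖z‖ < R := hz
  have hs := hasSum_cauchyPowerSeries_integral hci hz'
  simp only [zero_add] at hs
  have ht : ∀ m : ℕ, (cauchyPowerSeries F 0 R m fun _ => z) = z ^ m * coefA F R m := by
    intro m
    rw [coefA_eq, ContinuousMultilinearMap.mkPiRing_apply]
    simp [smul_eq_mul]
  rw [funext ht] at hs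
  exact hs.tsum_eq.symm

lemma inner_bound {F : ℂ → ℂ} {r M : ℝ} (hr : 0 < r) (hM : 0 ≤ M) {z : ℂ} (hz : r < ‖z‖)
    (hb : ∀ ζ : ℂ, ‖ζ‖ = r → ‖F ζ‖ ≤ M) :
    ‖∮ ζ in C(0, r), (ζ - z)⁻¹ • F ζ‖ ≤ 2 * Real.pi * r * (M / (‖z‖ - r)) := by
  refine circleIntegral.norm_integral_le_of_norm_le_const hr.le (fun ξ hξ => ?_)
  have hξn : ‖ξ‖ = r := mem_sphere_zero_iff_norm.1 hξ
  have hd : ‖z‖ - r ≤ ‖ξ - z‖ :=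
    calc ‖z‖ - r = ‖z‖ - ‖ξ‖ := by rw [hξn]
      _ ≤ ‖z - ξ‖ := norm_sub_norm_le z ξ
      _ = ‖ξ - z‖ := norm_sub_rev _ _
  have hdpos : (0:ℝ) < ‖z‖ - r := sub_pos.2 hz
  rw [norm_smul, norm_inv]
  calc ‖ξ - z‖⁻¹ * ‖F ξ‖ ≤ (‖z‖ - r)⁻¹ * M := by
        refine mul_le_mul ?_ (hb ξ hξn) (norm_nonneg _) (by positivity)
        exact inv_anti₀ hdpos hd
    _ = M / (‖z‖ - r) := by rw [div_eq_mul_inv, mul_comm]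



lemma extract {a : ℕ → ℕ → ℂ} {C : ℕ → ℝ} (h : ∀ n m, ‖a n m‖ ≤ C m) :
    ∃ φ : ℕ → ℕ, StrictMono φ ∧ ∃ α : ℕ → ℂ, (∀ m, ‖α m‖ ≤ C m) ∧
      ∀ m, Tendsto (fun k => a (φ k) m) atTop (𝓝 (α m)) := by
  have hcomp : IsCompact (Set.pi univ fun m : ℕ => closedBall (0:ℂ) (C m)) :=
    isCompact_univ_pi fun m => isCompact_closedBall _ _
  have hmem : ∀ n, (fun m => a n m) ∈ Set.pi univ fun m : ℕ => closedBall (0:ℂ) (C m) :=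
    fun n => mem_univ_pi.2 fun m => mem_closedBall_zero_iff.2 (h n m)
  obtain ⟨α, hα, φ, hφ, hconv⟩ := hcomp.isSeqCompact hmem
  refine ⟨φ, hφ, α, fun m => mem_closedBall_zero_iff.1 (mem_univ_pi.1 hα m), fun m => ?_⟩
  exact (tendsto_pi_nhds.1 hconv) m

lemma summable_pow_mul {R M r : ℝ} (hR : 0 < R) (hrR : r < R) (hr0 : 0 ≤ r) {α : ℕ → ℂ}
    (hα : ∀ m, ‖α m‖ ≤ M / R ^ m) {z : ℂ} (hz : ‖z‖ ≤ r) :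
    Summable (fun m : ℕ => ‖z ^ m * α m‖) := by
  refine Summable.of_nonneg_of_le (fun m => norm_nonneg _) (fun m => ?_)
    ((summable_geometric_of_lt_one (by positivity) ((div_lt_one hR).2 hrR)).mul_left M)
  rw [norm_mul, norm_pow]
  calc ‖z‖ ^ m * ‖α m‖ ≤ r ^ m * (M / R ^ m) :=
        mul_le_mul (pow_le_pow_left₀ (norm_nonneg _) hz m) (hα m) (norm_nonneg _) (by positivity)
    _ = M * (r / R) ^ m := by rw [div_pow]; field_simp

lemma diffOn_tsum {R M : ℝ} (hR : 0 < R) {α : ℕ → ℂ} (hα : ∀ m, ‖α m‖ ≤ M / R ^ m) :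
    DifferentiableOn ℂ (fun z : ℂ => ∑' m : ℕ, z ^ m * α m) {z : ℂ | ‖z‖ < R} := by
  set q : FormalMultilinearSeries ℂ ℂ ℂ :=
    fun m => ContinuousMultilinearMap.mkPiRing ℂ (Fin m) (α m) with hq
  have hrad : (R.toNNReal : ENNReal) ≤ q.radius := by
    refine q.le_radius_of_bound M (fun m => ?_)
    have hnorm : ‖q m‖ = ‖α m‖ := ContinuousMultilinearMap.norm_mkPiRing (α m)
    rw [hnorm, Real.coe_toNNReal R hR.le]
    calc ‖α m‖ * R ^ m ≤ M / R ^ m * R ^ m :=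
          mul_le_mul_of_nonneg_right (hα m) (by positivity)
      _ = M := div_mul_cancel₀ M (by positivity)
  have hradpos : 0 < q.radius :=
    lt_of_lt_of_le (ENNReal.coe_pos.2 (Real.toNNReal_pos.2 hR)) hrad
  have hball := q.hasFPowerSeriesOnBall hradpos
  have hdiff := hball.differentiableOn
  refine DifferentiableOn.congr (hdiff.mono fun z hz => ?_) fun z hz => ?_
  · have h1 : edist z 0 < (R.toNNReal : ENNReal) := by
      rw [show ((R.toNNReal : ENNReal)) = ENNReal.ofReal R from rfl]
      exact edist_lt_ofReal.2 (by rwa [dist_zero_right])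
    exact EMetric.mem_ball.2 (lt_of_lt_of_le h1 hrad)
  · rw [FormalMultilinearSeries.sum]
    refine tsum_congr fun m => ?_
    rw [show q m = ContinuousMultilinearMap.mkPiRing ℂ (Fin m) (α m) from rfl,
      ContinuousMultilinearMap.mkPiRing_apply]
    simp [smul_eq_mul]

lemma circleIntegral_inv_smul (G : ℂ → ℂ) {ρ : ℝ} (hρ : ρ ≠ 0) :
    (∮ ζ in C(0, ρ), (ζ - 0)⁻¹ • G ζ)
      = Complex.I • ∫ θ in (0:ℝ)..2 * Real.pi, G (circleMap 0 ρ θ) := by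
  rw [circleIntegral, ← intervalIntegral.integral_smul]
  refine intervalIntegral.integral_congr (fun θ _ => ?_)
  have h : circleMap 0 ρ θ ≠ 0 := circleMap_ne_center hρ
  rw [deriv_circleMap, sub_zero, smul_smul]
  congr 1
  rw [mul_comm (circleMap 0 ρ θ) Complex.I, mul_assoc, mul_inv_cancel₀ h, mul_one]

lemma avg_change {F : ℂ → ℂ} {r R' : ℝ} (hr : 0 < r) (hR' : 0 < R') {τ : ℂ}
    (hτ : ‖τ‖ = r * R') :
    (∮ ζ in C(0, R'), (ζ - 0)⁻¹ • F (τ / ζ)) = ∮ ζ in C(0, r), (ζ - 0)⁻¹ • F ζ := by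
  rw [circleIntegral_inv_smul _ hR'.ne', circleIntegral_inv_smul F hr.ne']
  congr 1
  have hτeq : ((r : ℂ) * (R' : ℂ)) * Complex.exp (τ.arg * Complex.I) = τ := by
    rw [show ((r : ℂ) * (R' : ℂ)) = ((r * R' : ℝ) : ℂ) by push_cast; ring, ← hτ]
    exact Complex.norm_mul_exp_arg_mul_I τ
  have key : ∀ θ : ℝ, τ / circleMap 0 R' θ = circleMap 0 r (τ.arg - θ) := by
    intro θ
    have h1 : Complex.exp ((θ:ℂ) * Complex.I) ≠ 0 := Complex.exp_ne_zero _
    have hR'0 : (R' : ℂ) ≠ 0 := by exact_mod_cast hR'.ne'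
    rw [circleMap, circleMap, zero_add, zero_add]
    set A : ℂ := (τ.arg : ℂ) with hA
    rw [show (((τ.arg - θ : ℝ)) : ℂ) = A - θ by rw [hA]; push_cast; ring]
    rw [show (A - (θ:ℂ)) * Complex.I = A * Complex.I - θ * Complex.I by ring,
      Complex.exp_sub, ← hτeq]
    field_simp
  have hfun : (fun θ : ℝ => F (τ / circleMap 0 R' θ))
      = fun θ : ℝ => (F ∘ circleMap 0 r) (τ.arg - θ) := funext fun θ => by rw [key θ]; rfl
  rw [hfun, intervalIntegral.integral_comp_sub_left (F ∘ circleMap 0 r) τ.arg]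
  have hper : Function.Periodic (F ∘ circleMap 0 r) (2 * Real.pi) :=
    (periodic_circleMap 0 r).comp F
  have := hper.intervalIntegral_add_eq (τ.arg - 2 * Real.pi) 0
  rw [sub_zero]
  calc (∫ x in τ.arg - 2 * Real.pi..τ.arg, (F ∘ circleMap 0 r) x)
      = ∫ x in τ.arg - 2 * Real.pi..(τ.arg - 2 * Real.pi) + 2 * Real.pi,
          (F ∘ circleMap 0 r) x := by ring_nf
    _ = ∫ x in (0:ℝ)..0 + 2 * Real.pi, (F ∘ circleMap 0 r) x := this
    _ = ∫ x in (0:ℝ)..2 * Real.pi, F (circleMap 0 r x) := by rw [zero_add]; rfl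



lemma tendstoUniformlyOn_tsum_of_coeff {R M r : ℝ} (hR : 0 < R) (hM : 0 < M) (hr0 : 0 ≤ r)
    (hrR : r < R) {a : ℕ → ℕ → ℂ} {α : ℕ → ℂ}
    (ha : ∀ n m, ‖a n m‖ ≤ M / R ^ m) (hα : ∀ m, ‖α m‖ ≤ M / R ^ m)
    (hconv : ∀ m, Tendsto (fun n => a n m) atTop (𝓝 (α m))) :
    TendstoUniformlyOn (fun n z => ∑' m : ℕ, z ^ m * a n m)
      (fun z => ∑' m : ℕ, z ^ m * α m) atTop (closedBall (0:ℂ) r) := by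
  rw [Metric.tendstoUniformlyOn_iff]
  intro ε hε
  set q : ℝ := r / R with hqdef
  have hq0 : 0 ≤ q := by positivity
  have hq1 : q < 1 := (div_lt_one hR).2 hrR
  have h1q : 0 < 1 - q := by linarith
  have htail : Tendsto (fun N : ℕ => 2 * M / (1 - q) * q ^ N) atTop (𝓝 0) := by
    simpa using (tendsto_pow_atTop_nhds_zero_of_lt_one hq0 hq1).const_mul (2 * M / (1 - q))
  obtain ⟨N, hN⟩ := (htail.eventually (gt_mem_nhds (half_pos hε))).exists
  set B : ℝ := N * max 1 r ^ N + 1 with hBdef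
  have hB : 0 < B := by positivity
  set δ : ℝ := ε / 2 / B with hδdef
  have hδ : 0 < δ := by positivity
  have hev : ∀ᶠ n in atTop, ∀ m ∈ Finset.range N, ‖α m - a n m‖ < δ := by
    rw [Filter.eventually_all_finset]
    intro m _
    have h := Metric.tendsto_nhds.1 (hconv m) δ hδ
    filter_upwards [h] with n hn
    rwa [← dist_eq_norm, dist_comm]
  filter_upwards [hev] with n hn z hz
  have hzr : ‖z‖ ≤ r := mem_closedBall_zero_iff.1 hz
  have hsα : Summable (fun m : ℕ => ‖z ^ m * α m‖) := summable_pow_mul hR hrR hr0 hα hzr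
  have hsa : Summable (fun m : ℕ => ‖z ^ m * a n m‖) :=
    summable_pow_mul hR hrR hr0 (ha n) hzr
  set d : ℕ → ℂ := fun m => z ^ m * (α m - a n m) with hddef
  have hdle : ∀ m, ‖d m‖ ≤ r ^ m * (2 * M / R ^ m) := by
    intro m
    rw [hddef]
    calc ‖z ^ m * (α m - a n m)‖ = ‖z‖ ^ m * ‖α m - a n m‖ := by rw [norm_mul, norm_pow]
      _ ≤ r ^ m * (2 * M / R ^ m) := by
          refine mul_le_mul (pow_le_pow_left₀ (norm_nonneg _) hzr m) ?_ (norm_nonneg _)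
            (by positivity)
          calc ‖α m - a n m‖ ≤ ‖α m‖ + ‖a n m‖ := norm_sub_le _ _
            _ ≤ M / R ^ m + M / R ^ m := add_le_add (hα m) (ha n m)
            _ = 2 * M / R ^ m := by ring
  have hdgeom : ∀ m, r ^ m * (2 * M / R ^ m) = 2 * M * q ^ m := by
    intro m
    rw [hqdef, div_pow]
    field_simp
  have hsd : Summable (fun m => ‖d m‖) := by
    refine Summable.of_nonneg_of_le (fun m => norm_nonneg _) (fun m => (hdle m).trans_eq
      (hdgeom m)) ((summable_geometric_of_lt_one hq0 hq1).mul_left (2 * M))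
  have hkey : dist (∑' m : ℕ, z ^ m * α m) (∑' m : ℕ, z ^ m * a n m) = ‖∑' m, d m‖ := by
    rw [dist_eq_norm, ← Summable.tsum_sub hsα.of_norm hsa.of_norm]
    congr 1
    exact tsum_congr fun m => by rw [hddef]; ring
  rw [hkey]
  have hsplit : ∑' m, ‖d m‖ = (∑ m ∈ Finset.range N, ‖d m‖) + ∑' m : ℕ, ‖d (m + N)‖ :=
    (Summable.sum_add_tsum_nat_add N hsd).symm
  have hhead : (∑ m ∈ Finset.range N, ‖d m‖) < ε / 2 := by
    have hone : (1:ℝ) ≤ max 1 r := le_max_left _ _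
    have hstep : ∀ m ∈ Finset.range N, ‖d m‖ ≤ max 1 r ^ N * δ := by
      intro m hm
      have hmN : m ≤ N := (Finset.mem_range.1 hm).le
      have h1 : ‖d m‖ ≤ ‖z‖ ^ m * ‖α m - a n m‖ := by rw [hddef, norm_mul, norm_pow]
      have h2 : ‖z‖ ^ m ≤ max 1 r ^ N := by
        calc ‖z‖ ^ m ≤ max 1 r ^ m :=
              pow_le_pow_left₀ (norm_nonneg _) (hzr.trans (le_max_right _ _)) m
          _ ≤ max 1 r ^ N := pow_le_pow_right₀ hone hmN
      calc ‖d m‖ ≤ ‖z‖ ^ m * ‖α m - a n m‖ := h1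
        _ ≤ max 1 r ^ N * δ :=
            mul_le_mul h2 (hn m hm).le (norm_nonneg _) (by positivity)
    calc (∑ m ∈ Finset.range N, ‖d m‖) ≤ N * (max 1 r ^ N * δ) := by
          have := Finset.sum_le_card_nsmul (Finset.range N) (fun m => ‖d m‖)
            (max 1 r ^ N * δ) hstep
          simpa [Finset.card_range, nsmul_eq_mul] using this
      _ = N * max 1 r ^ N * δ := by ring
      _ < B * δ := by
          refine mul_lt_mul_of_pos_right ?_ hδ
          rw [hBdef]; linarith
      _ = ε / 2 := by rw [hδdef]; field_simp
  have htail2 : (∑' m : ℕ, ‖d (m + N)‖) < ε / 2 := by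
    have hle : (∑' m : ℕ, ‖d (m + N)‖) ≤ ∑' m : ℕ, 2 * M * q ^ N * q ^ m := by
      refine Summable.tsum_le_tsum (fun m => ?_) ((summable_nat_add_iff N).2 hsd)
        ((summable_geometric_of_lt_one hq0 hq1).mul_left _)
      calc ‖d (m + N)‖ ≤ r ^ (m + N) * (2 * M / R ^ (m + N)) := hdle _
        _ = 2 * M * q ^ (m + N) := hdgeom _
        _ = 2 * M * q ^ N * q ^ m := by rw [pow_add]; ring
    refine lt_of_le_of_lt hle ?_
    rw [tsum_mul_left, tsum_geometric_of_lt_one hq0 hq1]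
    calc 2 * M * q ^ N * (1 - q)⁻¹ = 2 * M / (1 - q) * q ^ N := by
          field_simp
      _ < ε / 2 := hN
  calc ‖∑' m, d m‖ ≤ ∑' m, ‖d m‖ := norm_tsum_le_tsum_norm hsd
    _ = (∑ m ∈ Finset.range N, ‖d m‖) + ∑' m : ℕ, ‖d (m + N)‖ := hsplit
    _ < ε / 2 + ε / 2 := add_lt_add hhead htail2
    _ = ε := add_halves ε



lemma side {R M : ℝ} (hR : 0 < R) (hM : 0 < M) {F : ℕ → ℂ → ℂ} {r : ℕ → ℝ}
    (hrpos : ∀ k, 0 < r k) (hrR : ∀ k, r k < R) (hr0 : Tendsto r atTop (𝓝 0))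
    {U : ℕ → Set ℂ} (hU : ∀ k, IsOpen (U k))
    (hUsub : ∀ k, ∀ ζ : ℂ, r k ≤ ‖ζ‖ → ‖ζ‖ ≤ R → ζ ∈ U k)
    (hFd : ∀ k, DifferentiableOn ℂ (F k) (U k))
    (hFb : ∀ k, ∀ ζ : ℂ, r k ≤ ‖ζ‖ → ‖ζ‖ ≤ R → ‖F k ζ‖ ≤ M)
    {α : ℕ → ℂ} (hα : ∀ m, ‖α m‖ ≤ M / R ^ m)
    (hconv : ∀ m, Tendsto (fun k => coefA (F k) R m) atTop (𝓝 (α m)))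
    {K : Set ℂ} (hK : IsCompact K) (hKsub : K ⊆ {z : ℂ | 0 < ‖z‖ ∧ ‖z‖ < R}) :
    TendstoUniformlyOn (fun k z => F k z) (fun z => ∑' m : ℕ, z ^ m * α m) atTop K := by
  rcases K.eq_empty_or_nonempty with rfl | hne
  · exact tendstoUniformlyOn_empty
  -- radius bounds for K
  obtain ⟨z₁, hz₁K, hz₁max'⟩ := hK.exists_isMaxOn hne continuous_norm.continuousOn
  obtain ⟨z₀, hz₀K, hz₀min'⟩ := hK.exists_isMinOn hne continuous_norm.continuousOn
  have hz₁max : ∀ z ∈ K, ‖z‖ ≤ ‖z₁‖ := fun z hz => hz₁max' hz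
  have hz₀min : ∀ z ∈ K, ‖z₀‖ ≤ ‖z‖ := fun z hz => hz₀min' hz
  set rK : ℝ := ‖z₁‖ with hrKdef
  set ε₀ : ℝ := ‖z₀‖ with hε₀def
  have hε₀pos : 0 < ε₀ := (hKsub hz₀K).1
  have hrKR : rK < R := (hKsub hz₁K).2
  have hKball : K ⊆ closedBall (0:ℂ) rK := fun z hz => mem_closedBall_zero_iff.2 (hz₁max z hz)
  have hb_a : ∀ k m, ‖coefA (F k) R m‖ ≤ M / R ^ m := by
    intro k m
    refine norm_coefA_le hR hM.le (fun ζ hζ => hFb k ζ ?_ hζ.le) m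
    rw [hζ]; exact (hrR k).le
  have huc := tendstoUniformlyOn_tsum_of_coeff hR hM (norm_nonneg z₁) hrKR
    (a := fun k m => coefA (F k) R m) hb_a hα hconv
  have hucK := huc.mono hKball
  -- identity F k z = tsum - inner integral, with inner integral small
  have hcont : ∀ k, ContinuousOn (F k) (sphere (0:ℂ) R) := by
    intro k
    refine (hFd k).continuousOn.mono (fun ζ hζ => ?_)
    have : ‖ζ‖ = R := mem_sphere_zero_iff_norm.1 hζ
    exact hUsub k ζ (by rw [this]; exact (hrR k).le) this.le
  have h2πI : (2 * Real.pi * Complex.I : ℂ) ≠ 0 := by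
    simp [Complex.I_ne_zero, Real.pi_ne_zero]
  have hid : ∀ k, ∀ z : ℂ, r k < ‖z‖ → ‖z‖ < R →
      F k z = (∑' m : ℕ, z ^ m * coefA (F k) R m)
        - (2 * Real.pi * Complex.I : ℂ)⁻¹ • ∮ ζ in C(0, r k), (ζ - z)⁻¹ • F k ζ := by
    intro k z hz1 hz2
    have hsplit := split (hrpos k) (hrR k) (hU k) (hUsub k) (hFd k) hz1 hz2
    have hts := cInt_eq_tsum hR (hcont k) hz2
    rw [← hts]
    have := congrArg (fun x => (2 * Real.pi * Complex.I : ℂ)⁻¹ * x) hsplit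
    simp only [mul_sub] at this
    rw [← mul_assoc, inv_mul_cancel₀ h2πI, one_mul] at this
    rw [smul_eq_mul, smul_eq_mul, ← this]
  -- final assembly
  rw [Metric.tendstoUniformlyOn_iff] at hucK ⊢
  intro ε hε
  have hsmall : ∀ᶠ k in atTop, r k < min (ε₀ / 2) (ε₀ * ε / (4 * M)) := by
    refine hr0.eventually (gt_mem_nhds ?_)
    have : 0 < ε₀ * ε / (4 * M) := div_pos (mul_pos hε₀pos hε) (by linarith)
    exact lt_min (half_pos hε₀pos) this
  filter_upwards [(hucK (ε / 2) (half_pos hε)).and hsmall] with k hk z hzK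
  obtain ⟨hk1, hk2⟩ := hk
  have hz0 : ε₀ ≤ ‖z‖ := hz₀min z hzK
  have hzR : ‖z‖ < R := (hKsub hzK).2
  have hrk1 : r k < ε₀ / 2 := lt_of_lt_of_le hk2 (min_le_left _ _)
  have hrk2 : r k < ε₀ * ε / (4 * M) := lt_of_lt_of_le hk2 (min_le_right _ _)
  have hrkz : r k < ‖z‖ := hrk1.trans_le ((by linarith : ε₀ / 2 ≤ ε₀).trans hz0)
  have hzmem : z ∈ closedBall (0:ℂ) rK := hKball hzK
  have hid' := hid k z hrkz hzR
  -- bound inner term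
  have hin : ‖(2 * Real.pi * Complex.I : ℂ)⁻¹ • ∮ ζ in C(0, r k), (ζ - z)⁻¹ • F k ζ‖
      < ε / 2 := by
    have hbound := inner_bound (hrpos k) hM.le hrkz
      (fun ζ hζ => hFb k ζ hζ.ge (hζ.le.trans (hrR k).le))
    have hnrm : ‖(2 * Real.pi * Complex.I : ℂ)⁻¹‖ = (2 * Real.pi)⁻¹ := by
      rw [norm_inv]
      simp [norm_mul, Complex.norm_I, Complex.norm_real,
        abs_of_pos Real.pi_pos, Complex.norm_two]
    rw [norm_smul, hnrm]
    have hπ : (2 * Real.pi)⁻¹ * (2 * Real.pi) = 1 := inv_mul_cancel₀ (by positivity)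
    have h2 : (2 * Real.pi)⁻¹ * (2 * Real.pi * r k * (M / (‖z‖ - r k)))
        = r k * M / (‖z‖ - r k) := by
      rw [show 2 * Real.pi * r k * (M / (‖z‖ - r k))
          = (2 * Real.pi) * (r k * M / (‖z‖ - r k)) by ring, ← mul_assoc, hπ, one_mul]
    have hle : (2 * Real.pi)⁻¹ * ‖∮ ζ in C(0, r k), (ζ - z)⁻¹ • F k ζ‖
        ≤ r k * M / (‖z‖ - r k) := by
      rw [← h2]
      exact mul_le_mul_of_nonneg_left hbound (by positivity)
    refine lt_of_le_of_lt hle ?_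
    -- r k * M / (‖z‖ - r k) ≤ r k * M / (ε₀/2) < ε/2
    have hden : ε₀ / 2 ≤ ‖z‖ - r k := by linarith
    have hd2 : r k * M / (‖z‖ - r k) ≤ r k * M / (ε₀ / 2) := by
      refine div_le_div_of_nonneg_left (mul_nonneg (hrpos k).le hM.le) (half_pos hε₀pos) hden
    refine lt_of_le_of_lt hd2 ?_
    rw [div_lt_iff₀ (half_pos hε₀pos)]
    calc r k * M < (ε₀ * ε / (4 * M)) * M := by
          exact mul_lt_mul_of_pos_right hrk2 hM
      _ = ε / 2 * (ε₀ / 2) := by field_simp [hM.ne']; ring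
  -- combine
  calc dist ((fun z => ∑' m : ℕ, z ^ m * α m) z) (F k z)
      ≤ dist (∑' m : ℕ, z ^ m * α m) (∑' m : ℕ, z ^ m * coefA (F k) R m)
        + dist (∑' m : ℕ, z ^ m * coefA (F k) R m) (F k z) := dist_triangle _ _ _
    _ < ε / 2 + ε / 2 := by
        refine add_lt_add (hk1 z hzK) ?_
        rw [dist_eq_norm, hid']
        simpa using hin
    _ = ε := add_halves ε


end NFaux

open Metric Set Topology NFaux
end NFauxSection

open Metric Set Topology NFaux

/-- Normal families lemma for band bounded sequences of coefficient functions on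
degenerating annuli: a sequence `fₙ` holomorphic on the annuli
`{|tₙ|/c' < |ζ| < c}`, bounded by `M` on the outer bands `{ρ₁c ≤ |ζ| ≤ ρ₂c}` and the
inner bands `{|tₙ|/(c'ρ₂) ≤ |ζ| ≤ |tₙ|/(c'ρ₁)}`, has a subsequence converging uniformly
on compacta of the punctured discs `{0 < |z| < ρ₂c}` and (in the coordinate `w = tₙ/ζ`)
`{0 < |w| < ρ₂c'}` to holomorphic limits `g`, `h` with matching values `g 0 = h 0`. -/
theorem normal_families_band_bounded
    (c c' ρ₁ ρ₂ M : ℝ) (hc : 0 < c) (hc' : 0 < c')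
    (hρ₁ : 0 < ρ₁) (hρ : ρ₁ < ρ₂) (hρ₂ : ρ₂ < 1) (hM : 0 < M)
    (t : ℕ → ℂ) (ht0 : ∀ n, t n ≠ 0)
    (htlim : Tendsto t atTop (nhds 0))
    (htsmall : ∀ n, ‖t n‖ < c * c' * ρ₁ ^ 2)
    (f : ℕ → ℂ → ℂ)
    (hf : ∀ n, DifferentiableOn ℂ (f n)
      {ζ : ℂ | ‖t n‖ / c' < ‖ζ‖ ∧ ‖ζ‖ < c})
    (hband_out : ∀ n, ∀ ζ : ℂ, ρ₁ * c ≤ ‖ζ‖ → ‖ζ‖ ≤ ρ₂ * c →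
      ‖f n ζ‖ ≤ M)
    (hband_in : ∀ n, ∀ ζ : ℂ, ‖t n‖ / (c' * ρ₂) ≤ ‖ζ‖ →
      ‖ζ‖ ≤ ‖t n‖ / (c' * ρ₁) → ‖f n ζ‖ ≤ M) :
    ∃ nk : ℕ → ℕ, StrictMono nk ∧
    ∃ g h : ℂ → ℂ,
      DifferentiableOn ℂ g {z : ℂ | ‖z‖ < ρ₂ * c} ∧
      DifferentiableOn ℂ h {w : ℂ | ‖w‖ < ρ₂ * c'} ∧
      (∀ K : Set ℂ, IsCompact K →
        K ⊆ {z : ℂ | 0 < ‖z‖ ∧ ‖z‖ < ρ₂ * c} →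
        TendstoUniformlyOn (fun k z => f (nk k) z) g atTop K) ∧
      (∀ K : Set ℂ, IsCompact K →
        K ⊆ {w : ℂ | 0 < ‖w‖ ∧ ‖w‖ < ρ₂ * c'} →
        TendstoUniformlyOn (fun k w => f (nk k) (t (nk k) / w)) h atTop K) ∧
      g 0 = h 0 := by
  have hρ₂pos : 0 < ρ₂ := hρ₁.trans hρ
  have hRpos : 0 < ρ₂ * c := mul_pos hρ₂pos hc
  have hR'pos : 0 < ρ₂ * c' := mul_pos hρ₂pos hc'
  have htpos : ∀ n, 0 < ‖t n‖ := fun n => norm_pos_iff.2 (ht0 n)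
  have htsmall' : ∀ n, ‖t n‖ < c * c' * ρ₁ ^ 2 := htsmall
  have hcc' : 0 < c * c' := mul_pos hc hc'
  have hsq : 0 < (ρ₂ - ρ₁) * (ρ₂ + ρ₁) := mul_pos (sub_pos.2 hρ) (by linarith)
  -- inner radii
  have hrpos : ∀ n, 0 < ‖t n‖ / (c' * ρ₂) := fun n => div_pos (htpos n) (by positivity)
  have hr'pos : ∀ n, 0 < ‖t n‖ / (c * ρ₂) := fun n => div_pos (htpos n) (by positivity)
  have hrR : ∀ n, ‖t n‖ / (c' * ρ₂) < ρ₂ * c := by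
    intro n
    rw [div_lt_iff₀ (by positivity)]
    nlinarith [htsmall' n, hcc', hsq]
  have hr'R' : ∀ n, ‖t n‖ / (c * ρ₂) < ρ₂ * c' := by
    intro n
    rw [div_lt_iff₀ (by positivity)]
    nlinarith [htsmall' n, hcc', hsq]
  have hr0 : Tendsto (fun n => ‖t n‖ / (c' * ρ₂)) atTop (𝓝 0) := by
    have h1 : Tendsto (fun n => ‖t n‖) atTop (𝓝 0) := by
      simpa [Function.comp_def] using (continuous_norm.tendsto (0:ℂ)).comp htlim
    simpa using h1.div_const (c' * ρ₂)
  have hr'0 : Tendsto (fun n => ‖t n‖ / (c * ρ₂)) atTop (𝓝 0) := by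
    have h1 : Tendsto (fun n => ‖t n‖) atTop (𝓝 0) := by
      simpa [Function.comp_def] using (continuous_norm.tendsto (0:ℂ)).comp htlim
    simpa using h1.div_const (c * ρ₂)
  -- the open annuli of differentiability, z side
  have hUopen : ∀ n, IsOpen {ζ : ℂ | ‖t n‖ / c' < ‖ζ‖ ∧ ‖ζ‖ < c} :=
    fun n => (isOpen_lt continuous_const continuous_norm).inter
      (isOpen_lt continuous_norm continuous_const)
  have hfU : ∀ n, DifferentiableOn ℂ (f n) {ζ : ℂ | ‖t n‖ / c' < ‖ζ‖ ∧ ‖ζ‖ < c} := hf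
  have hUsub : ∀ n, ∀ ζ : ℂ, ‖t n‖ / (c' * ρ₂) ≤ ‖ζ‖ → ‖ζ‖ ≤ ρ₂ * c →
      ζ ∈ {ζ : ℂ | ‖t n‖ / c' < ‖ζ‖ ∧ ‖ζ‖ < c} := by
    intro n ζ h1 h2
    constructor
    · refine lt_of_lt_of_le ?_ h1
      rw [div_lt_div_iff₀ hc' (by positivity)]
      nlinarith [htpos n, mul_pos (htpos n) hc', hρ₂]
    · refine lt_of_le_of_lt h2 ?_
      nlinarith
  have hdiffAt : ∀ n, ∀ ζ : ℂ, ‖t n‖ / (c' * ρ₂) ≤ ‖ζ‖ → ‖ζ‖ ≤ ρ₂ * c →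
      DifferentiableAt ℂ (f n) ζ :=
    fun n ζ h1 h2 => (hfU n).differentiableAt ((hUopen n).mem_nhds (hUsub n ζ h1 h2))
  -- full bound on annulus
  have hbig : ∀ n, ∀ ζ : ℂ, ‖t n‖ / (c' * ρ₂) ≤ ‖ζ‖ → ‖ζ‖ ≤ ρ₂ * c → ‖f n ζ‖ ≤ M := by
    intro n
    refine maxmod (hrpos n) (hrR n) (hdiffAt n) ?_ ?_
    · intro ζ hζ
      refine hband_in n ζ (le_of_eq hζ.symm) ?_
      show ‖ζ‖ ≤ ‖t n‖ / (c' * ρ₁)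
      rw [hζ]
      refine div_le_div_of_nonneg_left (norm_nonneg _) (by positivity) ?_
      nlinarith
    · intro ζ hζ
      refine hband_out n ζ ?_ (le_of_eq hζ)
      show ρ₁ * c ≤ ‖ζ‖
      rw [hζ]; nlinarith
  -- w side
  have hU'open : ∀ n, IsOpen {w : ℂ | ‖t n‖ / c < ‖w‖ ∧ ‖w‖ < c'} :=
    fun n => (isOpen_lt continuous_const continuous_norm).inter
      (isOpen_lt continuous_norm continuous_const)
  have hwne : ∀ n, ∀ w : ℂ, ‖t n‖ / c < ‖w‖ → w ≠ 0 := by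
    intro n w h1
    exact norm_pos_iff.1 (lt_of_le_of_lt (by positivity) h1)
  have hmap : ∀ n, ∀ w : ℂ, ‖t n‖ / c < ‖w‖ → ‖w‖ < c' →
      t n / w ∈ {ζ : ℂ | ‖t n‖ / c' < ‖ζ‖ ∧ ‖ζ‖ < c} := by
    intro n w h1 h2
    have hw0 : w ≠ 0 := hwne n w h1
    have hwpos : 0 < ‖w‖ := norm_pos_iff.2 hw0
    have hnw : ‖t n / w‖ = ‖t n‖ / ‖w‖ := norm_div _ _
    constructor
    · show ‖t n‖ / c' < ‖t n / w‖
      rw [hnw]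
      exact div_lt_div_of_pos_left (htpos n) hwpos h2
    · show ‖t n / w‖ < c
      rw [hnw, div_lt_iff₀ hwpos]
      rw [div_lt_iff₀ hc] at h1
      nlinarith [htpos n]
  have hF'U : ∀ n, DifferentiableOn ℂ (fun w => f n (t n / w))
      {w : ℂ | ‖t n‖ / c < ‖w‖ ∧ ‖w‖ < c'} := by
    intro n w hw
    have hw0 : w ≠ 0 := hwne n w hw.1
    have hd1 : DifferentiableAt ℂ (fun w : ℂ => t n / w) w :=
      (differentiableAt_const (t n)).div differentiableAt_id hw0
    have hd2 : DifferentiableAt ℂ (f n) (t n / w) :=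
      (hfU n).differentiableAt ((hUopen n).mem_nhds (hmap n w hw.1 hw.2))
    exact (hd2.comp w hd1).differentiableWithinAt
  have hU'sub : ∀ n, ∀ w : ℂ, ‖t n‖ / (c * ρ₂) ≤ ‖w‖ → ‖w‖ ≤ ρ₂ * c' →
      w ∈ {w : ℂ | ‖t n‖ / c < ‖w‖ ∧ ‖w‖ < c'} := by
    intro n w h1 h2
    constructor
    · refine lt_of_lt_of_le ?_ h1
      rw [div_lt_div_iff₀ hc (by positivity)]
      nlinarith [htpos n, mul_pos (htpos n) hc, hρ₂]
    · refine lt_of_le_of_lt h2 ?_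
      nlinarith
  have hbig' : ∀ n, ∀ w : ℂ, ‖t n‖ / (c * ρ₂) ≤ ‖w‖ → ‖w‖ ≤ ρ₂ * c' →
      ‖f n (t n / w)‖ ≤ M := by
    intro n w h1 h2
    have hw0 : w ≠ 0 := hwne n w (hU'sub n w h1 h2).1
    have hwpos : 0 < ‖w‖ := norm_pos_iff.2 hw0
    have hnw : ‖t n / w‖ = ‖t n‖ / ‖w‖ := norm_div _ _
    refine hbig n (t n / w) ?_ ?_
    · rw [hnw, div_le_div_iff₀ (by positivity) hwpos]
      nlinarith [htpos n]
    · rw [hnw, div_le_iff₀ hwpos]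
      rw [div_le_iff₀ (by positivity)] at h1
      nlinarith [htpos n]
  -- coefficient bounds
  have haB : ∀ n m, ‖coefA (f n) (ρ₂ * c) m‖ ≤ M / (ρ₂ * c) ^ m := by
    intro n m
    refine norm_coefA_le hRpos hM.le (fun ζ hζ => hbig n ζ ?_ hζ.le) m
    rw [hζ]; exact (hrR n).le
  have hbB : ∀ n m, ‖coefA (fun w => f n (t n / w)) (ρ₂ * c') m‖ ≤ M / (ρ₂ * c') ^ m := by
    intro n m
    refine norm_coefA_le hR'pos hM.le (fun w hw => hbig' n w ?_ hw.le) m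
    rw [hw]; exact (hr'R' n).le
  -- extraction
  obtain ⟨φ, hφ, α, hαb, hαconv⟩ := extract haB
  obtain ⟨ψ, hψ, β, hβb, hβconv⟩ :=
    extract (a := fun k m => coefA (fun w => f (φ k) (t (φ k) / w)) (ρ₂ * c') m)
      (fun k m => hbB (φ k) m)
  refine ⟨φ ∘ ψ, hφ.comp hψ, (fun z => ∑' m : ℕ, z ^ m * α m),
    (fun w => ∑' m : ℕ, w ^ m * β m), ?_, ?_, ?_, ?_, ?_⟩
  · exact diffOn_tsum hRpos hαb
  · exact diffOn_tsum hR'pos hβb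
  · intro K hK hKsub
    exact side (r := fun k => ‖t (φ (ψ k))‖ / (c' * ρ₂)) hRpos hM
      (fun k => hrpos _) (fun k => hrR _) (hr0.comp (hφ.comp hψ).tendsto_atTop)
      (fun k => hUopen _) (fun k => hUsub _) (fun k => hfU _) (fun k => hbig _)
      hαb (fun m => (hαconv m).comp hψ.tendsto_atTop) hK hKsub
  · intro K hK hKsub
    exact side (r := fun k => ‖t (φ (ψ k))‖ / (c * ρ₂)) hR'pos hM
      (fun k => hr'pos _) (fun k => hr'R' _) (hr'0.comp (hφ.comp hψ).tendsto_atTop)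
      (fun k => hU'open _) (fun k => hU'sub _) (fun k => hF'U _) (fun k => hbig' _)
      hβb (fun m => hβconv m) hK hKsub
  · -- g 0 = h 0
    have hg0 : (∑' m : ℕ, (0:ℂ) ^ m * α m) = α 0 := by
      rw [tsum_eq_single 0 (fun m hm => by rw [zero_pow hm, zero_mul])]
      rw [pow_zero, one_mul]
    have hh0 : (∑' m : ℕ, (0:ℂ) ^ m * β m) = β 0 := by
      rw [tsum_eq_single 0 (fun m hm => by rw [zero_pow hm, zero_mul])]
      rw [pow_zero, one_mul]
    have hab0 : ∀ n, coefA (fun w => f n (t n / w)) (ρ₂ * c') 0 = coefA (f n) (ρ₂ * c) 0 := by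
      intro n
      have e1 : ∀ (X : ℂ → ℂ) (ρ : ℝ), coefA X ρ 0
          = (2 * Real.pi * Complex.I : ℂ)⁻¹ • ∮ ζ in C(0, ρ), (ζ - 0)⁻¹ • X ζ := by
        intro X ρ
        simp only [coefA, pow_zero, one_smul]
      rw [e1, e1]
      congr 1
      have havg : (∮ ζ in C(0, ρ₂ * c'), (ζ - 0)⁻¹ • f n (t n / ζ))
          = ∮ ζ in C(0, ‖t n‖ / (c' * ρ₂)), (ζ - 0)⁻¹ • f n ζ := by
        refine avg_change (hrpos n) hR'pos ?_
        show ‖t n‖ = ‖t n‖ / (c' * ρ₂) * (ρ₂ * c')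
        field_simp
      have hann : (∮ ζ in C(0, ρ₂ * c), (ζ - 0)⁻¹ • f n ζ)
          = ∮ ζ in C(0, ‖t n‖ / (c' * ρ₂)), (ζ - 0)⁻¹ • f n ζ := by
        refine Complex.circleIntegral_sub_center_inv_smul_eq_of_differentiable_on_annulus_off_countable
          (hrpos n) (hrR n).le countable_empty ?_ ?_
        · intro ζ hζ
          have h1 : ‖t n‖ / (c' * ρ₂) ≤ ‖ζ‖ :=
            not_lt.1 (fun hlt => hζ.2 (mem_ball_zero_iff.2 hlt))
          have h2 : ‖ζ‖ ≤ ρ₂ * c := mem_closedBall_zero_iff.1 hζ.1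
          exact (hdiffAt n ζ h1 h2).continuousAt.continuousWithinAt
        · intro ζ hζ
          have h1 : ‖t n‖ / (c' * ρ₂) ≤ ‖ζ‖ :=
            le_of_lt (not_le.1 (fun hle => hζ.1.2 (mem_closedBall_zero_iff.2 hle)))
          have h2 : ‖ζ‖ ≤ ρ₂ * c := (mem_ball_zero_iff.1 hζ.1.1).le
          exact hdiffAt n ζ h1 h2
      rw [havg, hann]
    have hβ0 : Tendsto (fun k => coefA (f (φ (ψ k))) (ρ₂ * c) 0) atTop (𝓝 (β 0)) := by
      have := hβconv 0
      simpa only [hab0] using this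
    have hα0 : Tendsto (fun k => coefA (f (φ (ψ k))) (ρ₂ * c) 0) atTop (𝓝 (α 0)) :=
      (hαconv 0).comp hψ.tendsto_atTop
    show (∑' m : ℕ, (0:ℂ) ^ m * α m) = ∑' m : ℕ, (0:ℂ) ^ m * β m
    rw [hg0, hh0]
    exact tendsto_nhds_unique hα0 hβ0
end

section
/- Let c, c' > 0, 0 < ρ₁ < ρ₂ < 1, M > 0, and let f : ℂ × ℂ → ℂ be holomorphic on V' = {(z, w) : 0 < |z| < c, 0 < |w| < c'}. Suppose |f(z, w)| ≤ M whenever (z, w) ∈ V' satisfies ρ₁c ≤ |z| ≤ ρ₂c, and |f(z, w)| ≤ M whenever (z, w) ∈ V' satisfies ρ₁c' ≤ |w| ≤ ρ₂c'. Then |f(z, w)| ≤ M for all (z, w) ∈ V' with |z| ≤ ρ₂c and |w| ≤ ρ₂c'. -/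
/-- Maximum principle on the fibers of the nodal family: a holomorphic function on
`V' = {(z,w) : 0 < |z| < c, 0 < |w| < c'}` bounded by `M` on the band
`{ρ₁c ≤ |z| ≤ ρ₂c}` and on the band `{ρ₁c' ≤ |w| ≤ ρ₂c'}` is bounded by `M` on all of
`V' ∩ {|z| ≤ ρ₂c, |w| ≤ ρ₂c'}`. -/
theorem nodal_family_band_bound
    (c c' ρ₁ ρ₂ M : ℝ) (hc : 0 < c) (hc' : 0 < c')
    (hρ₁ : 0 < ρ₁) (hρ : ρ₁ < ρ₂) (hρ₂ : ρ₂ < 1) (hM : 0 < M)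
    (f : ℂ × ℂ → ℂ)
    (hf : DifferentiableOn ℂ f
      {p : ℂ × ℂ | 0 < ‖p.1‖ ∧ ‖p.1‖ < c ∧
        0 < ‖p.2‖ ∧ ‖p.2‖ < c'})
    (hband_z : ∀ p : ℂ × ℂ,
      (0 < ‖p.1‖ ∧ ‖p.1‖ < c ∧
        0 < ‖p.2‖ ∧ ‖p.2‖ < c') →
      ρ₁ * c ≤ ‖p.1‖ → ‖p.1‖ ≤ ρ₂ * c → ‖f p‖ ≤ M)
    (hband_w : ∀ p : ℂ × ℂ,
      (0 < ‖p.1‖ ∧ ‖p.1‖ < c ∧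
        0 < ‖p.2‖ ∧ ‖p.2‖ < c') →
      ρ₁ * c' ≤ ‖p.2‖ → ‖p.2‖ ≤ ρ₂ * c' → ‖f p‖ ≤ M) :
    ∀ p : ℂ × ℂ,
      (0 < ‖p.1‖ ∧ ‖p.1‖ < c ∧
        0 < ‖p.2‖ ∧ ‖p.2‖ < c') →
      ‖p.1‖ ≤ ρ₂ * c → ‖p.2‖ ≤ ρ₂ * c' → ‖f p‖ ≤ M := by
  have hρ₂pos : 0 < ρ₂ := lt_trans hρ₁ hρ
  -- V' is open
  have hVopen : IsOpen {p : ℂ × ℂ | 0 < ‖p.1‖ ∧ ‖p.1‖ < c ∧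
      0 < ‖p.2‖ ∧ ‖p.2‖ < c'} := by
    have h1 : Continuous fun p : ℂ × ℂ => ‖p.1‖ :=
      continuous_norm.comp continuous_fst
    have h2 : Continuous fun p : ℂ × ℂ => ‖p.2‖ :=
      continuous_norm.comp continuous_snd
    have : {p : ℂ × ℂ | 0 < ‖p.1‖ ∧ ‖p.1‖ < c ∧
        0 < ‖p.2‖ ∧ ‖p.2‖ < c'} =
        {p : ℂ × ℂ | 0 < ‖p.1‖} ∩ ({p | ‖p.1‖ < c} ∩
          ({p | 0 < ‖p.2‖} ∩ {p | ‖p.2‖ < c'})) := by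
      ext p; simp [Set.mem_setOf_eq, and_assoc]
    rw [this]
    exact (isOpen_lt continuous_const h1).inter ((isOpen_lt h1 continuous_const).inter
      ((isOpen_lt continuous_const h2).inter (isOpen_lt h2 continuous_const)))
  rintro ⟨z, w⟩ ⟨hz0, hzc, hw0, hwc'⟩ hzρ hwρ
  set t : ℂ := z * w with ht
  have hzne : z ≠ 0 := fun h => by simp [h] at hz0
  have hwne : w ≠ 0 := fun h => by simp [h] at hw0
  have htne : t ≠ 0 := mul_ne_zero hzne hwne
  have htabs : ‖t‖ = ‖z‖ * ‖w‖ := by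
    simp [ht, map_mul]
  set r : ℝ := ‖t‖ / (ρ₂ * c') with hr
  set R : ℝ := ρ₂ * c with hR
  have htpos : 0 < ‖t‖ := norm_pos_iff.mpr htne
  have hrpos : 0 < r := div_pos htpos (by positivity)
  have hRpos : 0 < R := by positivity
  have hrz : r ≤ ‖z‖ := by
    rw [hr, div_le_iff₀ (by positivity), htabs]
    exact mul_le_mul_of_nonneg_left hwρ (norm_nonneg z)
  have hzR : ‖z‖ ≤ R := hzρ
  -- the fiber map and restricted function
  set φ : ℂ → ℂ × ℂ := fun ζ => (ζ, t * ζ⁻¹) with hφ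
  set g : ℂ → ℂ := fun ζ => f (φ ζ) with hg
  -- points of the closed annulus map into V'
  have hmem : ∀ ζ : ℂ, r ≤ ‖ζ‖ → ‖ζ‖ ≤ R →
      (0 < ‖(φ ζ).1‖ ∧ ‖(φ ζ).1‖ < c ∧
        0 < ‖(φ ζ).2‖ ∧ ‖(φ ζ).2‖ < c') ∧
      ‖(φ ζ).2‖ ≤ ρ₂ * c' := by
    intro ζ h1 h2
    have hζpos : 0 < ‖ζ‖ := lt_of_lt_of_le hrpos h1
    have hζne : ζ ≠ 0 := fun h => by simp [h] at hζpos
    have habs2 : ‖(φ ζ).2‖ = ‖t‖ / ‖ζ‖ := by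
      simp [hφ, map_mul, map_inv₀, div_eq_mul_inv]
    have hw2le : ‖(φ ζ).2‖ ≤ ρ₂ * c' := by
      rw [habs2, div_le_iff₀ hζpos]
      calc ‖t‖ = r * (ρ₂ * c') := by
            rw [hr]; field_simp
        _ ≤ ‖ζ‖ * (ρ₂ * c') := by
            exact mul_le_mul_of_nonneg_right h1 (by positivity)
        _ = ρ₂ * c' * ‖ζ‖ := by ring
    refine ⟨⟨hζpos, lt_of_le_of_lt h2 ?_, ?_, lt_of_le_of_lt hw2le ?_⟩, hw2le⟩
    · rw [hR]; nlinarith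
    · rw [habs2]; exact div_pos htpos hζpos
    · nlinarith
  -- g is differentiable at every point of the closed annulus
  have hgdiff : ∀ ζ : ℂ, r ≤ ‖ζ‖ → ‖ζ‖ ≤ R → DifferentiableAt ℂ g ζ := by
    intro ζ h1 h2
    have hζne : ζ ≠ 0 := fun h => by
      have := lt_of_lt_of_le hrpos h1; simp [h] at this
    have hφd : DifferentiableAt ℂ φ ζ :=
      (differentiableAt_id.prodMk ((differentiableAt_const t).mul
        (differentiableAt_inv hζne)))
    have hfd : DifferentiableAt ℂ f (φ ζ) :=
      hf.differentiableAt (hVopen.mem_nhds ((hmem ζ h1 h2).1))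
    exact hfd.comp ζ hφd
  -- the open annulus
  set U : Set ℂ := (Metric.closedBall (0:ℂ) r)ᶜ ∩ Metric.ball 0 R with hU
  have hUball : ∀ ζ ∈ U, r < ‖ζ‖ ∧ ‖ζ‖ < R := by
    intro ζ hζ
    rcases hζ with ⟨h1, h2⟩
    simp only [Metric.mem_closedBall, Metric.mem_ball, Complex.dist_eq, sub_zero,
      Set.mem_compl_iff, not_le] at h1 h2
    exact ⟨h1, h2⟩
  have hclosU : closure U ⊆ {ζ : ℂ | r ≤ ‖ζ‖ ∧ ‖ζ‖ ≤ R} := by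
    apply closure_minimal
    · intro ζ hζ
      exact ⟨(hUball ζ hζ).1.le, (hUball ζ hζ).2.le⟩
    · exact IsClosed.inter (isClosed_le continuous_const continuous_norm)
        (isClosed_le continuous_norm continuous_const)
  -- frontier bound
  have hfront : ∀ ζ ∈ frontier U, ‖g ζ‖ ≤ M := by
    intro ζ hζ
    have hfr : frontier U ⊆ Metric.sphere (0:ℂ) r ∪ Metric.sphere 0 R := by
      intro x hx
      have := frontier_inter_subset (Metric.closedBall (0:ℂ) r)ᶜ (Metric.ball 0 R) hx
      rcases this with h | h
      · left
        have : x ∈ frontier (Metric.closedBall (0:ℂ) r) := by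
          rw [← frontier_compl]; exact h.1
        rwa [frontier_closedBall _ (ne_of_gt hrpos)] at this
      · right
        have : x ∈ frontier (Metric.ball (0:ℂ) R) := h.2
        rwa [frontier_ball _ (ne_of_gt hRpos)] at this
    rcases hfr hζ with h | h
    · -- inner circle: |ζ| = r, so |second coordinate| = ρ₂ c' : use hband_w
      have habs : ‖ζ‖ = r := by
        simpa [Complex.dist_eq] using h
      have hm := hmem ζ (le_of_eq habs.symm) (habs ▸ le_trans hrz hzR)
      have hζpos : (0:ℝ) < ‖ζ‖ := habs ▸ hrpos
      have hζne : ζ ≠ 0 := fun hh => by simp [hh] at hζpos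
      have habs2 : ‖(φ ζ).2‖ = ρ₂ * c' := by
        have : ‖(φ ζ).2‖ = ‖t‖ / ‖ζ‖ := by
          simp [hφ, map_mul, map_inv₀, div_eq_mul_inv]
        rw [this, habs, hr]
        field_simp
      have := hband_w (φ ζ) hm.1 (by rw [habs2]; nlinarith) (le_of_eq habs2)
      simpa [hg] using this
    · -- outer circle: |ζ| = R = ρ₂ c : use hband_z
      have habs : ‖ζ‖ = R := by
        simpa [Complex.dist_eq] using h
      have hm := hmem ζ (habs ▸ le_trans hrz hzR) (le_of_eq habs)
      have := hband_z (φ ζ) hm.1 (by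
        show ρ₁ * c ≤ ‖ζ‖
        rw [habs, hR]; nlinarith) (by
        show ‖ζ‖ ≤ ρ₂ * c
        rw [habs])
      simpa [hg] using this
  -- g z = f (z, w)
  have hgz : g z = f (z, w) := by
    simp only [hg, hφ]
    congr 1
    rw [ht]
    field_simp
  -- case split on the position of z
  rcases eq_or_lt_of_le hrz with hcase | hcase
  · -- |z| = r : then |w| = ρ₂ c', use hband_w directly
    have hwabs : ‖w‖ = ρ₂ * c' := by
      have : r = ‖z‖ := hcase
      rw [hr, htabs] at this
      rw [div_eq_iff (by positivity : (ρ₂ * c' : ℝ) ≠ 0)] at this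
      have hz' : ‖z‖ ≠ 0 := ne_of_gt hz0
      field_simp at this
      linarith
    exact hband_w (z, w) ⟨hz0, hzc, hw0, hwc'⟩ (by rw [hwabs]; nlinarith) (le_of_eq hwabs)
  rcases eq_or_lt_of_le hzR with hcase2 | hcase2
  · -- |z| = R : use hband_z directly
    exact hband_z (z, w) ⟨hz0, hzc, hw0, hwc'⟩ (by rw [hcase2, hR]; nlinarith) hzρ
  -- interior case: maximum principle
  have hzU : z ∈ U := by
    constructor
    · simp only [Set.mem_compl_iff, Metric.mem_closedBall, Complex.dist_eq, sub_zero, not_le]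
      exact hcase
    · simp only [Metric.mem_ball, Complex.dist_eq, sub_zero]
      exact hcase2
  have hbd : Bornology.IsBounded U :=
    (Metric.isBounded_ball).subset (Set.inter_subset_right)
  have hdc : DiffContOnCl ℂ g U := by
    refine ⟨fun ζ hζ => ?_, fun ζ hζ => ?_⟩
    · exact (hgdiff ζ (hUball ζ hζ).1.le (hUball ζ hζ).2.le).differentiableWithinAt
    · have := hclosU hζ
      exact (hgdiff ζ this.1 this.2).continuousAt.continuousWithinAt
  have := Complex.norm_le_of_forall_mem_frontier_norm_le hbd hdc hfront
    (subset_closure hzU)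
  rw [hgz] at this
  simpa using this
end

section
/- Let c, c' > 0, 0 < ρ₁ < ρ₂ < 1, M > 0, m a natural number, and let f : ℂ × ℂ → ℂ be holomorphic on V' = {(z, w) : 0 < |z| < c, 0 < |w| < c'}. Suppose |f(z, w)| ≤ M whenever (z, w) ∈ V' satisfies ρ₁c ≤ |z| ≤ ρ₂c, and |f(z, w)| ≤ M·|zw|^{−m} whenever (z, w) ∈ V' satisfies ρ₁c' ≤ |w| ≤ ρ₂c'. Then there exists a unique function F holomorphic on the polydisc {(z, w) : |z| < ρ₂c, |w| < ρ₂c'} such that F(z, w) = z^m · f(z, w) for all (z, w) with 0 < |z| < ρ₂c and 0 < |w| < ρ₂c'. -/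
open Complex Metric Set MeasureTheory Filter Function
open scoped Real Topology

local notation "cabs" => (Norm.norm : ℂ → ℝ)

lemma continuousOn_param_circleIntegral
    {A : Set ℂ} {k : ℂ → ℂ} {G : ℂ → ℂ → ℂ} {w₀ : ℂ} {δ : ℝ} (hδ : 0 < δ) {C : ℝ}
    (hk : Continuous fun θ : ℝ => k (circleMap w₀ δ θ))
    (hGc : ∀ θ : ℝ, ContinuousOn (fun z => G z (circleMap w₀ δ θ)) A)
    (hGm : ∀ z ∈ A, Continuous fun θ : ℝ => G z (circleMap w₀ δ θ))
    (hC : ∀ z ∈ A, ∀ θ : ℝ, ‖k (circleMap w₀ δ θ) • G z (circleMap w₀ δ θ)‖ ≤ C) :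
    ContinuousOn (fun z => ∮ ω in C(w₀, δ), k ω • G z ω) A := by
  have h2π : (0:ℝ) ≤ 2 * π := by positivity
  have hrw : ∀ z, (∮ ω in C(w₀, δ), k ω • G z ω)
      = ∫ θ in Ioc (0:ℝ) (2*π),
          (circleMap 0 δ θ * I) • (k (circleMap w₀ δ θ) • G z (circleMap w₀ δ θ)) := by
    intro z
    rw [show (∮ ω in C(w₀, δ), k ω • G z ω)
        = ∫ θ in (0:ℝ)..2*π, deriv (circleMap w₀ δ) θ •
            (k (circleMap w₀ δ θ) • G z (circleMap w₀ δ θ)) from rfl,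
      intervalIntegral.integral_of_le h2π]
    simp only [deriv_circleMap]
  simp only [hrw]
  apply continuousOn_of_dominated (bound := fun _ => δ * C)
  · intro z hz
    exact (((continuous_circleMap 0 δ).mul continuous_const).smul
      (hk.smul (hGm z hz))).aestronglyMeasurable.restrict
  · intro z hz
    refine Eventually.of_forall fun θ => ?_
    rw [norm_smul]
    have h1 : ‖circleMap 0 δ θ * I‖ = δ := by
      simp [norm_mul, norm_circleMap_zero, abs_of_pos hδ]
    rw [h1]
    exact mul_le_mul_of_nonneg_left (hC z hz θ) hδ.le
  · exact integrableOn_const measure_Ioc_lt_top.ne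
  · exact Eventually.of_forall fun θ =>
      (((hGc θ).const_smul (k (circleMap w₀ δ θ))).const_smul (circleMap 0 δ θ * I))


lemma polar_ext_pkg {φ : ℂ → ℂ} {c' B : ℝ} (hc' : 0 < c')
    (hd : DifferentiableOn ℂ φ {w : ℂ | 0 < cabs w ∧ cabs w < c'})
    (hb : ∀ w : ℂ, w ≠ 0 → cabs w < c' → cabs (φ w) ≤ B) :
    ∃ u : ℂ → ℂ, DifferentiableOn ℂ u (ball 0 c') ∧ (∀ w : ℂ, w ≠ 0 → u w = φ w) ∧
      (∀ w ∈ ball (0:ℂ) c', cabs (u w) ≤ B) := by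
  have hball : ball (0:ℂ) c' ∈ 𝓝 (0:ℂ) := ball_mem_nhds _ hc'
  have habs : ∀ w : ℂ, w ∈ ball (0:ℂ) c' \ {0} → w ≠ 0 ∧ cabs w < c' := by
    intro w hw
    refine ⟨hw.2, ?_⟩
    simpa using mem_ball_zero_iff.1 hw.1
  have hd' : DifferentiableOn ℂ φ (ball (0:ℂ) c' \ {0}) := by
    refine hd.mono fun w hw => ?_
    obtain ⟨h1, h2⟩ := habs w hw
    exact ⟨norm_pos_iff.mpr h1, h2⟩
  have hbdd : BddAbove (norm ∘ φ '' (ball (0:ℂ) c' \ {0})) := by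
    refine ⟨B, ?_⟩
    rintro x ⟨w, hw, rfl⟩
    obtain ⟨h1, h2⟩ := habs w hw
    simpa using hb w h1 h2
  have hu := Complex.differentiableOn_update_limUnder_of_bddAbove hball hd' hbdd
  set u : ℂ → ℂ := update φ 0 (limUnder (𝓝[≠] (0:ℂ)) φ) with hudef
  have hueq : ∀ w : ℂ, w ≠ 0 → u w = φ w := fun w hw => update_of_ne hw _ _
  refine ⟨u, hu, hueq, ?_⟩
  intro w hw
  rcases eq_or_ne w 0 with rfl | hw0
  · -- bound at the center via continuity
    have hne : (𝓝[(ball (0:ℂ) c') \ {0}] (0:ℂ)).NeBot := by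
      have : (ball (0:ℂ) c') \ {0} = {(0:ℂ)}ᶜ ∩ ball 0 c' := by
        rw [diff_eq, inter_comm]
      rw [this, ← nhdsWithin_restrict' _ hball]
      exact inferInstance
    have hcw : ContinuousWithinAt u (ball 0 c') 0 :=
      (hu.continuousOn) 0 (mem_ball_self hc')
    have hten : Tendsto u (𝓝[(ball (0:ℂ) c') \ {0}] 0) (𝓝 (u 0)) :=
      hcw.tendsto.mono_left (nhdsWithin_mono 0 diff_subset)
    have hten2 : Tendsto (fun w => cabs (u w)) (𝓝[(ball (0:ℂ) c') \ {0}] 0)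
        (𝓝 (cabs (u 0))) := (continuous_norm.tendsto (u 0)).comp hten
    refine le_of_tendsto hten2 ?_
    filter_upwards [self_mem_nhdsWithin] with w hw
    obtain ⟨h1, h2⟩ := habs w hw
    rw [hueq w h1]
    exact hb w h1 h2
  · rw [hueq w hw0]
    exact hb w hw0 (by simpa using mem_ball_zero_iff.1 hw)

set_option maxHeartbeats 4000000

/-- Extension with polar growth: if `f` is holomorphic on
`V' = {0 < |z| < c, 0 < |w| < c'}`, bounded by `M` on the outer band
`{ρ₁c ≤ |z| ≤ ρ₂c}` and by `M·|zw|^{-m}` on the inner band `{ρ₁c' ≤ |w| ≤ ρ₂c'}`,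
then `z^m · f(z,w)` extends uniquely to a holomorphic function on the polydisc
`{|z| < ρ₂c, |w| < ρ₂c'}`. -/
theorem polar_growth_extension
    (c c' ρ₁ ρ₂ M : ℝ) (hc : 0 < c) (hc' : 0 < c')
    (hρ₁ : 0 < ρ₁) (hρ : ρ₁ < ρ₂) (hρ₂ : ρ₂ < 1) (hM : 0 < M) (m : ℕ)
    (f : ℂ × ℂ → ℂ)
    (hf : DifferentiableOn ℂ f
      {p : ℂ × ℂ | 0 < ‖p.1‖ ∧ ‖p.1‖ < c ∧
        0 < ‖p.2‖ ∧ ‖p.2‖ < c'})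
    (hband_z : ∀ p : ℂ × ℂ,
      (0 < ‖p.1‖ ∧ ‖p.1‖ < c ∧
        0 < ‖p.2‖ ∧ ‖p.2‖ < c') →
      ρ₁ * c ≤ ‖p.1‖ → ‖p.1‖ ≤ ρ₂ * c → ‖f p‖ ≤ M)
    (hband_w : ∀ p : ℂ × ℂ,
      (0 < ‖p.1‖ ∧ ‖p.1‖ < c ∧
        0 < ‖p.2‖ ∧ ‖p.2‖ < c') →
      ρ₁ * c' ≤ ‖p.2‖ → ‖p.2‖ ≤ ρ₂ * c' →
      ‖f p‖ ≤ M / ‖p.1 * p.2‖ ^ m) :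
    ∃ F : ℂ × ℂ → ℂ,
      (DifferentiableOn ℂ F
        {p : ℂ × ℂ | ‖p.1‖ < ρ₂ * c ∧ ‖p.2‖ < ρ₂ * c'} ∧
        ∀ p : ℂ × ℂ,
          (0 < ‖p.1‖ ∧ ‖p.1‖ < ρ₂ * c) →
          (0 < ‖p.2‖ ∧ ‖p.2‖ < ρ₂ * c') →
          F p = p.1 ^ m * f p) ∧
      ∀ G : ℂ × ℂ → ℂ,
        (DifferentiableOn ℂ G
          {p : ℂ × ℂ | ‖p.1‖ < ρ₂ * c ∧ ‖p.2‖ < ρ₂ * c'} ∧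
          ∀ p : ℂ × ℂ,
            (0 < ‖p.1‖ ∧ ‖p.1‖ < ρ₂ * c) →
            (0 < ‖p.2‖ ∧ ‖p.2‖ < ρ₂ * c') →
            G p = p.1 ^ m * f p) →
        ∀ p : ℂ × ℂ, ‖p.1‖ < ρ₂ * c → ‖p.2‖ < ρ₂ * c' → G p = F p := by
  -- basic constants
  set r : ℝ := ρ₂ * c with hrdef
  set s : ℝ := ρ₂ * c' with hsdef
  have hρ₂0 : 0 < ρ₂ := hρ₁.trans hρ
  have hr0 : 0 < r := mul_pos hρ₂0 hc
  have hrc : r < c := by rw [hrdef]; nlinarith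
  have hs0 : 0 < s := mul_pos hρ₂0 hc'
  have hsc' : s < c' := by rw [hsdef]; nlinarith
  have hρ₁c_le_r : ρ₁ * c ≤ r := by rw [hrdef]; nlinarith
  have hρ₁c'_lt_s : ρ₁ * c' < s := by rw [hsdef]; nlinarith
  have hρ₁c'0 : 0 < ρ₁ * c' := by positivity
  have hopen : ∀ t : ℝ, IsOpen {ζ : ℂ | 0 < cabs ζ ∧ cabs ζ < t} :=
    fun t => (isOpen_lt continuous_const continuous_norm).inter
      (isOpen_lt continuous_norm continuous_const)
  have hfc : ContinuousOn f {p : ℂ × ℂ | 0 < cabs p.1 ∧ cabs p.1 < c ∧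
      0 < cabs p.2 ∧ cabs p.2 < c'} := hf.continuousOn
  set g : ℂ → ℂ → ℂ := fun z w => z ^ m * f (z, w) with hgdef
  -- differentiability of slices
  have hgdiff_w : ∀ z : ℂ, 0 < cabs z → cabs z < c →
      DifferentiableOn ℂ (g z) {w : ℂ | 0 < cabs w ∧ cabs w < c'} := by
    intro z hz0 hzc w hw
    have hmem : (z, w) ∈ {p : ℂ × ℂ | 0 < cabs p.1 ∧ cabs p.1 < c ∧
        0 < cabs p.2 ∧ cabs p.2 < c'} := ⟨hz0, hzc, hw.1, hw.2⟩
    have h1 : DifferentiableWithinAt ℂ (fun w' : ℂ => f (z, w'))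
        {w : ℂ | 0 < cabs w ∧ cabs w < c'} w :=
      (hf _ hmem).comp w ((differentiableWithinAt_const z).prodMk differentiableWithinAt_id)
        (fun x hx => ⟨hz0, hzc, hx.1, hx.2⟩)
    exact h1.const_mul _
  have hgdiff_z : ∀ w : ℂ, 0 < cabs w → cabs w < c' →
      DifferentiableOn ℂ (fun z => g z w) {z : ℂ | 0 < cabs z ∧ cabs z < c} := by
    intro w hw0 hwc z hz
    have hmem : (z, w) ∈ {p : ℂ × ℂ | 0 < cabs p.1 ∧ cabs p.1 < c ∧
        0 < cabs p.2 ∧ cabs p.2 < c'} := ⟨hz.1, hz.2, hw0, hwc⟩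
    have h1 : DifferentiableWithinAt ℂ (fun z' : ℂ => f (z', w))
        {z : ℂ | 0 < cabs z ∧ cabs z < c} z :=
      (hf _ hmem).comp z (differentiableWithinAt_id.prodMk (differentiableWithinAt_const w))
        (fun x hx => by exact ⟨hx.1, hx.2, hw0, hwc⟩)
    exact (differentiableWithinAt_id.pow m).mul h1
  -- bounds
  set B : ℝ := M * r ^ m with hBdef
  have hB0 : 0 < B := by positivity
  have hgb_z : ∀ z w : ℂ, ρ₁ * c ≤ cabs z → cabs z ≤ r → 0 < cabs z →
      cabs z < c → 0 < cabs w → cabs w < c' →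
      cabs (g z w) ≤ B := by
    intro z w h1 h2 h3 h4 h5 h6
    have hb := hband_z (z, w) ⟨h3, h4, h5, h6⟩ h1 h2
    rw [hgdef]
    simp only [norm_mul, norm_pow]
    have h1' : cabs z ^ m ≤ r ^ m := pow_le_pow_left₀ (norm_nonneg z) h2 m
    have h3' : (0:ℝ) ≤ r ^ m := le_trans (by positivity) h1'
    calc cabs z ^ m * cabs (f (z, w)) ≤ r ^ m * M :=
          mul_le_mul h1' hb (norm_nonneg _) h3'
      _ = B := mul_comm _ _
  have hgb_w : ∀ z w : ℂ, 0 < cabs z → cabs z < c → 0 < cabs w →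
      cabs w < c' → ρ₁ * c' ≤ cabs w → cabs w ≤ s →
      cabs (g z w) ≤ M / cabs w ^ m := by
    intro z w h1 h2 h3 h4 h5 h6
    have hb := hband_w (z, w) ⟨h1, h2, h3, h4⟩ h5 h6
    rw [hgdef]
    simp only [norm_mul, norm_pow] at hb ⊢
    rw [mul_pow] at hb
    have h7 : cabs z ^ m * cabs (f (z, w))
        ≤ cabs z ^ m * (M / (cabs z ^ m * cabs w ^ m)) :=
      mul_le_mul_of_nonneg_left hb (by positivity)
    refine h7.trans_eq ?_
    have hz' : cabs z ^ m ≠ 0 := by positivity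
    have hw' : cabs w ^ m ≠ 0 := by positivity
    field_simp
  -- removable singularity in `w` for `ζ` on the circle of radius `r`
  have hext : ∀ ζ : ℂ, cabs ζ = r → ∃ u : ℂ → ℂ,
      DifferentiableOn ℂ u (ball 0 c') ∧ (∀ w : ℂ, w ≠ 0 → u w = g ζ w) ∧
      (∀ w ∈ ball (0:ℂ) c', cabs (u w) ≤ B) := by
    intro ζ hζ
    have hζ0 : 0 < cabs ζ := hζ ▸ hr0
    have hζc : cabs ζ < c := hζ ▸ hrc
    refine polar_ext_pkg hc' (hgdiff_w ζ hζ0 hζc) ?_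
    intro w hw0 hwc
    exact hgb_z ζ w (hζ ▸ hρ₁c_le_r) hζ.le hζ0 hζc (norm_pos_iff.mpr hw0) hwc
  set h : ℂ → ℂ := fun ζ => (2 * π * I : ℂ)⁻¹ • ∮ ω in C(0, s), (ω - 0)⁻¹ • g ζ ω with hhdef
  set gt : ℂ → ℂ → ℂ := fun ζ w => if w = 0 then h ζ else g ζ w with hgtdef
  have hgt : ∀ ζ : ℂ, cabs ζ = r → DifferentiableOn ℂ (gt ζ) (ball 0 c') ∧
      (∀ w ∈ ball (0:ℂ) c', cabs (gt ζ w) ≤ B) := by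
    intro ζ hζ
    obtain ⟨u, hu, hueq, hub⟩ := hext ζ hζ
    have hgteq : ∀ w : ℂ, gt ζ w = u w := by
      intro w
      rcases eq_or_ne w 0 with rfl | hw0
      · have hsub : closedBall (0:ℂ) s ⊆ ball 0 c' := closedBall_subset_ball hsc'
        have hcau := Complex.circleIntegral_sub_inv_smul_of_differentiable_on_off_countable
          (Set.countable_empty) (mem_ball_self hs0) (hu.continuousOn.mono hsub)
          (fun x hx => (hu.differentiableAt (isOpen_ball.mem_nhds
            ((ball_subset_ball hsc'.le) hx.1))))
        have hcong : (∮ ω in C(0, s), (ω - 0)⁻¹ • g ζ ω) = ∮ ω in C(0, s), (ω - 0)⁻¹ • u ω := by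
          refine circleIntegral.integral_congr hs0.le (fun ω hω => ?_)
          have hω0 : ω ≠ 0 := by
            intro h0
            have := mem_sphere_zero_iff_norm.1 hω
            rw [h0] at this
            simp at this
            linarith
          rw [hueq ω hω0]
        have hgt0 : gt ζ 0 = h ζ := by simp [hgtdef]
        have hh0 : h ζ = (2 * π * I : ℂ)⁻¹ • ∮ ω in C(0, s), (ω - 0)⁻¹ • g ζ ω := by
          rw [hhdef]
        rw [hgt0, hh0, hcong, hcau, smul_smul, inv_mul_cancel₀ Complex.two_pi_I_ne_zero, one_smul]
      · rw [hueq w hw0]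
        simp [hgtdef, hw0]
    constructor
    · exact hu.congr (fun w _ => hgteq w)
    · intro w hw
      rw [hgteq w]
      exact hub w hw
  set δ : ℝ := (c' - s) / 2 with hδdef
  have hδ0 : 0 < δ := by rw [hδdef]; linarith
  have hgtderiv : ∀ ζ : ℂ, cabs ζ = r → ∀ w : ℂ, cabs w < s →
      cabs (deriv (gt ζ) w) ≤ B / δ := by
    intro ζ hζ w hw
    obtain ⟨hgtd, hgtb⟩ := hgt ζ hζ
    have hsub : closedBall w δ ⊆ ball (0:ℂ) c' := by
      intro x hx
      rw [mem_ball_zero_iff]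
      have h1 : ‖x - w‖ ≤ δ := mem_closedBall_iff_norm.1 hx
      calc ‖x‖ = ‖w + (x - w)‖ := by ring_nf
        _ ≤ ‖w‖ + ‖x - w‖ := norm_add_le _ _
        _ ≤ cabs w + δ := by linarith
        _ < s + δ := by linarith
        _ < c' := by rw [hδdef]; linarith
    have hdc : DiffContOnCl ℂ (gt ζ) (ball w δ) :=
      (hgtd.mono (closure_ball_subset_closedBall.trans hsub)).diffContOnCl
    have := norm_deriv_le_of_forall_mem_sphere_norm_le hδ0 hdc (fun x hx =>
      (by simpa using
        hgtb x (hsub (sphere_subset_closedBall hx)) : ‖gt ζ x‖ ≤ B))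
    simpa using this
  have hhcont : ContinuousOn h {ζ : ℂ | 0 < cabs ζ ∧ cabs ζ < c} := by
    rw [hhdef]
    apply ContinuousOn.fun_const_smul
    refine continuousOn_param_circleIntegral (C := s⁻¹ * (M / s ^ m)) hs0 ?_ ?_ ?_ ?_
    · refine (((continuous_circleMap 0 s).sub continuous_const).inv₀ ?_)
      intro θ
      rw [Pi.sub_apply, sub_zero]
      exact circleMap_ne_center hs0.ne'
    · intro θ
      have hωs : cabs (circleMap 0 s θ) = s := by
        simp [norm_circleMap_zero, abs_of_pos hs0]
      refine (continuousOn_pow m).mul (hfc.comp ?_ ?_)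
      · exact (continuousOn_id.prodMk continuousOn_const)
      · intro z hz
        exact ⟨hz.1, hz.2, by rw [hωs]; exact hs0, by rw [hωs]; exact hsc'⟩
    · intro z hz
      have hcm : Continuous fun θ : ℝ => ((z, circleMap 0 s θ) : ℂ × ℂ) :=
        continuous_const.prodMk (continuous_circleMap 0 s)
      refine continuous_const.mul (hfc.comp_continuous hcm ?_)
      intro θ
      have hωs : cabs (circleMap 0 s θ) = s := by
        simp [norm_circleMap_zero, abs_of_pos hs0]
      exact ⟨hz.1, hz.2, by rw [hωs]; exact hs0, by rw [hωs]; exact hsc'⟩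
    · intro z hz θ
      have hωs : cabs (circleMap 0 s θ) = s := by
        simp [norm_circleMap_zero, abs_of_pos hs0]
      rw [norm_smul, norm_inv, sub_zero, hωs]
      refine mul_le_mul_of_nonneg_left ?_ (by positivity)
      have := hgb_w z (circleMap 0 s θ) hz.1 hz.2 (by rw [hωs]; exact hs0)
        (by rw [hωs]; exact hsc') (by rw [hωs]; exact hρ₁c'_lt_s.le) (by rw [hωs])
      rw [hωs] at this
      exact this
  have hgtcont : ∀ w : ℂ, cabs w < c' →
      Continuous fun θ : ℝ => gt (circleMap 0 r θ) w := by
    intro w hw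
    have hζr : ∀ θ : ℝ, cabs (circleMap 0 r θ) = r := by
      intro θ; simp [norm_circleMap_zero, abs_of_pos hr0]
    rcases eq_or_ne w 0 with rfl | hw0
    · have : (fun θ : ℝ => gt (circleMap 0 r θ) 0) = fun θ : ℝ => h (circleMap 0 r θ) := by
        funext θ; simp [hgtdef]
      rw [this]
      exact hhcont.comp_continuous (continuous_circleMap 0 r)
        (fun θ => ⟨by rw [hζr θ]; exact hr0, by rw [hζr θ]; exact hrc⟩)
    · have : (fun θ : ℝ => gt (circleMap 0 r θ) w)
          = fun θ : ℝ => g (circleMap 0 r θ) w := by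
        funext θ; simp [hgtdef, hw0]
      rw [this]
      have hcm : Continuous fun θ : ℝ => ((circleMap 0 r θ, w) : ℂ × ℂ) :=
        (continuous_circleMap 0 r).prodMk continuous_const
      exact ((continuous_circleMap 0 r).pow m).mul (hfc.comp_continuous hcm
        (fun θ => ⟨by rw [hζr θ]; exact hr0, by rw [hζr θ]; exact hrc, norm_pos_iff.mpr hw0, hw⟩))
  have hDcont : ∀ w₀ : ℂ, cabs w₀ < s →
      Continuous fun θ : ℝ => deriv (gt (circleMap 0 r θ)) w₀ := by
    intro w₀ hw₀
    have hζr : ∀ θ : ℝ, cabs (circleMap 0 r θ) = r := by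
      intro θ; simp [norm_circleMap_zero, abs_of_pos hr0]
    obtain ⟨δ₀, hδ₀0, hδsub, hδavoid⟩ : ∃ δ₀ : ℝ, 0 < δ₀ ∧
        closedBall w₀ δ₀ ⊆ ball (0:ℂ) c' ∧ ∀ x ∈ sphere w₀ δ₀, x ≠ (0:ℂ) := by
      rcases eq_or_ne w₀ 0 with rfl | hw0
      · refine ⟨ρ₁ * c', hρ₁c'0, ?_, ?_⟩
        · intro x hx
          rw [mem_ball_zero_iff]
          have := mem_closedBall_zero_iff.1 hx
          linarith [hρ₁c'_lt_s, hsc']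
        · intro x hx h0
          rw [h0] at hx
          have h1 := mem_sphere_zero_iff_norm.1 hx
          rw [norm_zero] at h1
          exact (ne_of_gt hρ₁c'0) h1.symm
      · refine ⟨min δ (cabs w₀ / 2), lt_min hδ0 (by simpa using norm_pos_iff.mpr hw0), ?_, ?_⟩
        · intro x hx
          rw [mem_ball_zero_iff]
          have h1 : ‖x - w₀‖ ≤ min δ (cabs w₀ / 2) := mem_closedBall_iff_norm.1 hx
          calc ‖x‖ = ‖w₀ + (x - w₀)‖ := by ring_nf
            _ ≤ ‖w₀‖ + ‖x - w₀‖ := norm_add_le _ _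
            _ ≤ cabs w₀ + δ := by
                have := min_le_left δ (cabs w₀ / 2)
                linarith
            _ < s + δ := by linarith
            _ < c' := by rw [hδdef]; linarith
        · intro x hx h0
          have h1 : ‖x - w₀‖ = min δ (cabs w₀ / 2) := mem_sphere_iff_norm.1 hx
          rw [h0] at h1
          have h2 : ‖(0:ℂ) - w₀‖ = cabs w₀ := by
            rw [zero_sub, norm_neg]
          rw [h2] at h1
          have h3 := min_le_right δ (cabs w₀ / 2)
          rw [← h1] at h3
          have := norm_pos_iff.mpr hw0
          linarith
    have hδsub' : ∀ x ∈ sphere w₀ δ₀, 0 < cabs x ∧ cabs x < c' := by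
      intro x hx
      refine ⟨norm_pos_iff.mpr (hδavoid x hx), ?_⟩
      have := hδsub (sphere_subset_closedBall hx)
      rw [mem_ball_zero_iff] at this
      exact this
    have hrep : ∀ θ : ℝ, deriv (gt (circleMap 0 r θ)) w₀
        = (2 * π * I : ℂ)⁻¹ • ∮ ω in C(w₀, δ₀),
            ((ω - w₀) ^ (-2 : ℤ)) • g (circleMap 0 r θ) ω := by
      intro θ
      have hζ : cabs (circleMap 0 r θ) = r := hζr θ
      have hdc : DiffContOnCl ℂ (gt (circleMap 0 r θ)) (ball w₀ δ₀) :=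
        ((hgt _ hζ).1.mono (closure_ball_subset_closedBall.trans hδsub)).diffContOnCl
      rw [show deriv (gt (circleMap 0 r θ)) w₀ = (2 * π * I : ℂ)⁻¹ • ∮ ω in C(w₀, δ₀), ((ω - w₀) ^ (-2 : ℤ)) • gt (circleMap 0 r θ) ω by
        rw [show (∮ ω in C(w₀, δ₀), ((ω - w₀) ^ (-2 : ℤ)) • gt (circleMap 0 r θ) ω) = ∮ ω in C(w₀, δ₀), (1 / (ω - w₀) ^ 2) • gt (circleMap 0 r θ) ω by simp [zpow_neg, one_div],
          hdc.deriv_eq_smul_circleIntegral hδ₀0, smul_smul, inv_mul_cancel₀ Complex.two_pi_I_ne_zero, one_smul]]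
      congr 1
      refine circleIntegral.integral_congr hδ₀0.le (fun ω hω => ?_)
      simp [hgtdef, hδavoid ω hω]
    simp only [hrep]
    apply Continuous.fun_const_smul
    have hA : ContinuousOn (fun z : ℂ => ∮ ω in C(w₀, δ₀), ((ω - w₀) ^ (-2 : ℤ)) • g z ω)
        {z : ℂ | (0 < cabs z ∧ cabs z < c) ∧ ρ₁ * c ≤ cabs z ∧
          cabs z ≤ r} := by
      refine continuousOn_param_circleIntegral (C := (δ₀ ^ (-2 : ℤ)) * B) hδ₀0 ?_ ?_ ?_ ?_
      · refine Continuous.zpow₀ (((continuous_circleMap w₀ δ₀).sub continuous_const)) _ ?_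
        intro θ
        left
        rw [Pi.sub_apply, circleMap_sub_center]
        exact circleMap_ne_center hδ₀0.ne'
      · intro θ
        obtain ⟨hω0, hωc⟩ := hδsub' _ (circleMap_mem_sphere w₀ hδ₀0.le θ)
        refine (continuousOn_pow m).mul (hfc.comp (continuousOn_id.prodMk continuousOn_const) ?_)
        intro z hz
        exact ⟨hz.1.1, hz.1.2, hω0, hωc⟩
      · intro z hz
        have hcm : Continuous fun θ : ℝ => ((z, circleMap w₀ δ₀ θ) : ℂ × ℂ) :=
          continuous_const.prodMk (continuous_circleMap w₀ δ₀)
        refine continuous_const.mul (hfc.comp_continuous hcm ?_)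
        intro θ
        obtain ⟨hω0, hωc⟩ := hδsub' _ (circleMap_mem_sphere w₀ hδ₀0.le θ)
        exact ⟨hz.1.1, hz.1.2, hω0, hωc⟩
      · intro z hz θ
        obtain ⟨hω0, hωc⟩ := hδsub' _ (circleMap_mem_sphere w₀ hδ₀0.le θ)
        rw [norm_smul, norm_zpow,
          circleMap_sub_center, norm_circleMap_zero, abs_of_pos hδ₀0]
        refine mul_le_mul_of_nonneg_left ?_ (by positivity)
        exact hgb_z z _ hz.2.1 hz.2.2 hz.1.1 hz.1.2 hω0 hωc
    refine hA.comp_continuous (continuous_circleMap 0 r) ?_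
    intro θ
    exact ⟨⟨by rw [hζr θ]; exact hr0, by rw [hζr θ]; exact hrc⟩, by rw [hζr θ]; exact hρ₁c_le_r, (hζr θ).le⟩
  -- the extension
  set K : (ℂ × ℂ) → ℝ → ℂ := fun x θ =>
    deriv (circleMap 0 r) θ • ((circleMap 0 r θ - x.1)⁻¹ * gt (circleMap 0 r θ) x.2) with hKdef
  set F : ℂ × ℂ → ℂ := fun p => (2 * π * I : ℂ)⁻¹ • ∫ θ in Ioc (0:ℝ) (2*π), K p θ with hFdef
  have hFcirc : ∀ p : ℂ × ℂ,
      F p = (2 * π * I : ℂ)⁻¹ • ∮ ζ in C(0, r), (ζ - p.1)⁻¹ • gt ζ p.2 := by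
    intro p
    rw [hFdef]
    simp only
    congr 1
    rw [show (∮ ζ in C(0, r), (ζ - p.1)⁻¹ • gt ζ p.2)
        = ∫ θ in (0:ℝ)..(2*π), K p θ from rfl,
      intervalIntegral.integral_of_le (by positivity : (0:ℝ) ≤ 2*π)]
  have hFdiffAt : ∀ p : ℂ × ℂ, cabs p.1 < r → cabs p.2 < s →
      DifferentiableAt ℂ F p := by
    rintro ⟨z₀, w₀⟩ hz₀ hw₀
    simp only at hz₀ hw₀
    set e1 : ℝ := (r - cabs z₀) / 2 with he1def
    have he1 : 0 < e1 := by rw [he1def]; linarith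
    set e2 : ℝ := (s - cabs w₀) / 2 with he2def
    have he2 : 0 < e2 := by rw [he2def]; linarith
    set ε : ℝ := min e1 e2 with hεdef
    have hε0 : 0 < ε := lt_min he1 he2
    have hζr : ∀ θ : ℝ, cabs (circleMap 0 r θ) = r := fun θ => by
      simp [norm_circleMap_zero, abs_of_pos hr0]
    have hxfacts : ∀ x : ℂ × ℂ, x ∈ ball ((z₀, w₀) : ℂ × ℂ) ε →
        e1 ≤ r - cabs x.1 ∧ cabs x.1 < r ∧ cabs x.2 < s := by
      intro x hx
      have hd : ‖x - (z₀, w₀)‖ < ε := mem_ball_iff_norm.1 hx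
      have h1 : cabs (x.1 - z₀) < ε :=
        lt_of_le_of_lt (by simpa using norm_fst_le (x - (z₀, w₀))) hd
      have h2 : cabs (x.2 - w₀) < ε :=
        lt_of_le_of_lt (by simpa using norm_snd_le (x - (z₀, w₀))) hd
      have h1' : cabs x.1 ≤ cabs z₀ + cabs (x.1 - z₀) := by
        calc cabs x.1 = cabs (z₀ + (x.1 - z₀)) := by ring_nf
          _ ≤ _ := norm_add_le _ _
      have h2' : cabs x.2 ≤ cabs w₀ + cabs (x.2 - w₀) := by
        calc cabs x.2 = cabs (w₀ + (x.2 - w₀)) := by ring_nf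
          _ ≤ _ := norm_add_le _ _
      have hεe1 : ε ≤ e1 := min_le_left _ _
      have hεe2 : ε ≤ e2 := min_le_right _ _
      refine ⟨by linarith, by linarith, by linarith⟩
    set K' : (ℂ × ℂ) → ℝ → (ℂ × ℂ) →L[ℂ] ℂ := fun x θ =>
      deriv (circleMap 0 r) θ •
        ((circleMap 0 r θ - x.1)⁻¹ •
            (deriv (gt (circleMap 0 r θ)) x.2 • ContinuousLinearMap.snd ℂ ℂ ℂ)
          + gt (circleMap 0 r θ) x.2 •
            ((-(-1 : ℂ) / (circleMap 0 r θ - x.1) ^ 2) • ContinuousLinearMap.fst ℂ ℂ ℂ)) with hK'def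
    have hKderiv : ∀ θ : ℝ, ∀ x : ℂ × ℂ, cabs x.1 < r → cabs x.2 < s →
        HasFDerivAt (fun y => K y θ) (K' x θ) x := by
      intro θ x hx1 hx2
      simp only [hKdef, hK'def]
      have hne : circleMap 0 r θ - x.1 ≠ 0 := by
        intro hzz
        rw [sub_eq_zero] at hzz
        rw [← hzz] at hx1
        rw [hζr θ] at hx1
        exact lt_irrefl _ hx1
      have h1 : HasDerivAt (fun t : ℂ => (circleMap 0 r θ - t)⁻¹)
          (-(-1 : ℂ) / (circleMap 0 r θ - x.1) ^ 2) x.1 := by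
        have hb : HasDerivAt (fun t : ℂ => circleMap 0 r θ - t) (-1 : ℂ) x.1 := by
          simpa using (hasDerivAt_id x.1).const_sub (circleMap 0 r θ)
        exact hb.inv hne
      have hc1 : HasFDerivAt (fun y : ℂ × ℂ => (circleMap 0 r θ - y.1)⁻¹)
          ((-(-1 : ℂ) / (circleMap 0 r θ - x.1) ^ 2) • ContinuousLinearMap.fst ℂ ℂ ℂ) x :=
        h1.comp_hasFDerivAt x hasFDerivAt_fst
      have hgtd : DifferentiableAt ℂ (gt (circleMap 0 r θ)) x.2 :=
        ((hgt _ (hζr θ)).1).differentiableAt (isOpen_ball.mem_nhds (by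
          rw [mem_ball_zero_iff]; linarith))
      have hc2 : HasFDerivAt (fun y : ℂ × ℂ => gt (circleMap 0 r θ) y.2)
          (deriv (gt (circleMap 0 r θ)) x.2 • ContinuousLinearMap.snd ℂ ℂ ℂ) x :=
        (hgtd.hasDerivAt).comp_hasFDerivAt x hasFDerivAt_snd
      exact (hc1.fun_mul hc2).fun_const_smul _
    set bd : ℝ := r * (e1⁻¹ * (B / δ) + B * (e1⁻¹) ^ 2) with hbddef
    have hbound : ∀ θ : ℝ, ∀ x ∈ ball ((z₀, w₀) : ℂ × ℂ) ε, ‖K' x θ‖ ≤ bd := by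
      intro θ x hx
      obtain ⟨hxe1, hx1, hx2⟩ := hxfacts x hx
      have habs : e1 ≤ cabs (circleMap 0 r θ - x.1) := by
        have h1 : cabs (circleMap 0 r θ) - cabs x.1
            ≤ cabs (circleMap 0 r θ - x.1) := by
          simpa using norm_sub_norm_le (circleMap 0 r θ) x.1
        rw [hζr θ] at h1
        linarith
    
      have hb1 : ‖(circleMap 0 r θ - x.1)⁻¹ •
          (deriv (gt (circleMap 0 r θ)) x.2 • ContinuousLinearMap.snd ℂ ℂ ℂ)‖
          ≤ e1⁻¹ * (B / δ) := by
        have hle1 : ‖(circleMap 0 r θ - x.1)⁻¹‖ ≤ e1⁻¹ := by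
          rw [norm_inv]
          exact inv_anti₀ he1 habs
        have h3 : ‖deriv (gt (circleMap 0 r θ)) x.2‖ ≤ B / δ := by
          exact hgtderiv _ (hζr θ) x.2 hx2
        have hle2 : ‖deriv (gt (circleMap 0 r θ)) x.2‖ * ‖ContinuousLinearMap.snd ℂ ℂ ℂ‖
            ≤ B / δ := by
          calc ‖deriv (gt (circleMap 0 r θ)) x.2‖ * ‖ContinuousLinearMap.snd ℂ ℂ ℂ‖
              ≤ (B / δ) * 1 := mul_le_mul h3 (ContinuousLinearMap.norm_snd_le _ _ _) (norm_nonneg _)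
                (by positivity)
            _ = B / δ := mul_one _
        calc ‖(circleMap 0 r θ - x.1)⁻¹ •
            (deriv (gt (circleMap 0 r θ)) x.2 • ContinuousLinearMap.snd ℂ ℂ ℂ)‖
            ≤ ‖(circleMap 0 r θ - x.1)⁻¹‖ *
              ‖deriv (gt (circleMap 0 r θ)) x.2 • ContinuousLinearMap.snd ℂ ℂ ℂ‖ :=
              ContinuousLinearMap.opNorm_smul_le _ _
          _ ≤ ‖(circleMap 0 r θ - x.1)⁻¹‖ *
              (‖deriv (gt (circleMap 0 r θ)) x.2‖ * ‖ContinuousLinearMap.snd ℂ ℂ ℂ‖) :=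
              mul_le_mul_of_nonneg_left (ContinuousLinearMap.opNorm_smul_le _ _) (norm_nonneg _)
          _ ≤ e1⁻¹ * (B / δ) :=
              mul_le_mul hle1 hle2 (mul_nonneg (norm_nonneg _) (norm_nonneg _)) (by positivity)
      have hb2 : ‖gt (circleMap 0 r θ) x.2 •
          ((-(-1 : ℂ) / (circleMap 0 r θ - x.1) ^ 2) • ContinuousLinearMap.fst ℂ ℂ ℂ)‖
          ≤ B * (e1⁻¹) ^ 2 := by
        have hle1 : ‖gt (circleMap 0 r θ) x.2‖ ≤ B := by
          exact (hgt _ (hζr θ)).2 x.2 (by rw [mem_ball_zero_iff]; linarith)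
        have hle2 : ‖-(-1 : ℂ) / (circleMap 0 r θ - x.1) ^ 2‖ * ‖ContinuousLinearMap.fst ℂ ℂ ℂ‖
            ≤ (e1⁻¹) ^ 2 := by
          have h3 : ‖-(-1 : ℂ) / (circleMap 0 r θ - x.1) ^ 2‖ ≤ (e1⁻¹) ^ 2 := by
            have h4 : e1 ^ 2 ≤ cabs (circleMap 0 r θ - x.1) ^ 2 :=
              pow_le_pow_left₀ he1.le habs 2
            rw [norm_div, norm_pow]
            have h5 : cabs (-(-1 : ℂ)) = 1 := by norm_num
            rw [h5, inv_pow, one_div]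
            exact inv_anti₀ (by positivity) h4
          calc ‖-(-1 : ℂ) / (circleMap 0 r θ - x.1) ^ 2‖ * ‖ContinuousLinearMap.fst ℂ ℂ ℂ‖
              ≤ (e1⁻¹) ^ 2 * 1 := mul_le_mul h3 (ContinuousLinearMap.norm_fst_le _ _ _) (norm_nonneg _)
                (by positivity)
            _ = (e1⁻¹) ^ 2 := mul_one _
        calc ‖gt (circleMap 0 r θ) x.2 •
            ((-(-1 : ℂ) / (circleMap 0 r θ - x.1) ^ 2) • ContinuousLinearMap.fst ℂ ℂ ℂ)‖
            ≤ ‖gt (circleMap 0 r θ) x.2‖ *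
              ‖(-(-1 : ℂ) / (circleMap 0 r θ - x.1) ^ 2) • ContinuousLinearMap.fst ℂ ℂ ℂ‖ :=
              ContinuousLinearMap.opNorm_smul_le _ _
          _ ≤ ‖gt (circleMap 0 r θ) x.2‖ *
              (‖-(-1 : ℂ) / (circleMap 0 r θ - x.1) ^ 2‖ * ‖ContinuousLinearMap.fst ℂ ℂ ℂ‖) :=
              mul_le_mul_of_nonneg_left (ContinuousLinearMap.opNorm_smul_le _ _) (norm_nonneg _)
          _ ≤ B * (e1⁻¹) ^ 2 :=
              mul_le_mul hle1 hle2 (mul_nonneg (norm_nonneg _) (norm_nonneg _)) hB0.le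
      rw [hK'def]
      simp only
      have hdnorm : ‖deriv (circleMap 0 r) θ‖ = r := by
        simp [deriv_circleMap, norm_mul, norm_circleMap_zero, abs_of_pos hr0]
      rw [hbddef]
      calc ‖deriv (circleMap 0 r) θ •
          ((circleMap 0 r θ - x.1)⁻¹ •
              (deriv (gt (circleMap 0 r θ)) x.2 • ContinuousLinearMap.snd ℂ ℂ ℂ)
            + gt (circleMap 0 r θ) x.2 •
              ((-(-1 : ℂ) / (circleMap 0 r θ - x.1) ^ 2) • ContinuousLinearMap.fst ℂ ℂ ℂ))‖
          ≤ ‖deriv (circleMap 0 r) θ‖ * ‖(circleMap 0 r θ - x.1)⁻¹ •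
              (deriv (gt (circleMap 0 r θ)) x.2 • ContinuousLinearMap.snd ℂ ℂ ℂ)
            + gt (circleMap 0 r θ) x.2 •
              ((-(-1 : ℂ) / (circleMap 0 r θ - x.1) ^ 2) • ContinuousLinearMap.fst ℂ ℂ ℂ)‖ :=
            ContinuousLinearMap.opNorm_smul_le _ _
        _ ≤ r * (e1⁻¹ * (B / δ) + B * (e1⁻¹) ^ 2) := by
            rw [hdnorm]
            refine mul_le_mul_of_nonneg_left ?_ hr0.le
            calc ‖_ + _‖ ≤ _ + _ := norm_add_le _ _
              _ ≤ e1⁻¹ * (B / δ) + B * (e1⁻¹) ^ 2 := add_le_add hb1 hb2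
    have hKcont : ∀ x : ℂ × ℂ, cabs x.1 < r → cabs x.2 < c' →
        Continuous fun θ => K x θ := by
      intro x hx1 hx2
      have h1 : Continuous fun θ : ℝ => deriv (circleMap 0 r) θ := by
        simp only [deriv_circleMap]
        exact (continuous_circleMap 0 r).mul continuous_const
      have h2 : Continuous fun θ : ℝ => (circleMap 0 r θ - x.1)⁻¹ := by
        refine ((continuous_circleMap 0 r).sub continuous_const).inv₀ ?_
        intro θ hzz
        simp only [Pi.sub_apply, sub_eq_zero] at hzz
        rw [← hzz, hζr θ] at hx1
        exact lt_irrefl _ hx1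
      simp only [hKdef]
      exact h1.smul (h2.mul (hgtcont x.2 hx2))
    have hmeasev : ∀ᶠ x in 𝓝 ((z₀, w₀) : ℂ × ℂ),
        AEStronglyMeasurable (fun θ => K x θ) (volume.restrict (Ioc (0:ℝ) (2*π))) := by
      filter_upwards [ball_mem_nhds _ hε0] with x hx
      obtain ⟨-, hx1, hx2⟩ := hxfacts x hx
      exact ((hKcont x hx1 (hx2.trans hsc')).aestronglyMeasurable).restrict
    have hint : Integrable (fun θ => K (z₀, w₀) θ) (volume.restrict (Ioc (0:ℝ) (2*π))) :=
      (hKcont (z₀, w₀) hz₀ (hw₀.trans hsc')).integrableOn_Ioc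
    have hF'meas : AEStronglyMeasurable (fun θ => K' (z₀, w₀) θ)
        (volume.restrict (Ioc (0:ℝ) (2*π))) := by
      have h1 : Continuous fun θ : ℝ => deriv (circleMap 0 r) θ := by
        simp only [deriv_circleMap]
        exact (continuous_circleMap 0 r).mul continuous_const
      have hne : ∀ θ : ℝ, circleMap 0 r θ - z₀ ≠ 0 := by
        intro θ hzz
        rw [sub_eq_zero] at hzz
        rw [← hzz, hζr θ] at hz₀
        exact lt_irrefl _ hz₀
      have h2 : Continuous fun θ : ℝ => (circleMap 0 r θ - z₀)⁻¹ :=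
        ((continuous_circleMap 0 r).sub continuous_const).inv₀ hne
      have h3 : Continuous fun θ : ℝ => -(-1 : ℂ) / (circleMap 0 r θ - z₀) ^ 2 := by
        refine continuous_const.div
          (((continuous_circleMap 0 r).sub continuous_const).pow 2) ?_
        intro θ
        exact pow_ne_zero _ (hne θ)
      simp only [hK'def]
      exact ((h1.smul ((h2.smul ((hDcont w₀ hw₀).smul continuous_const)).add
        ((hgtcont w₀ (hw₀.trans hsc')).smul (h3.smul continuous_const)))).aestronglyMeasurable).restrict
    have hboundint : Integrable (fun _ : ℝ => bd) (volume.restrict (Ioc (0:ℝ) (2*π))) :=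
      integrableOn_const measure_Ioc_lt_top.ne
    have main := hasFDerivAt_integral_of_dominated_of_fderiv_le (𝕜 := ℂ) (ball_mem_nhds _ hε0) hmeasev hint hF'meas
      (Eventually.of_forall fun θ x hx => hbound θ x hx)
      hboundint
      (Eventually.of_forall fun θ x hx =>
        hKderiv θ x (hxfacts x hx).2.1 (hxfacts x hx).2.2)
    have hdiff : DifferentiableAt ℂ
        (fun x : ℂ × ℂ => ∫ θ, K x θ ∂(volume.restrict (Ioc (0:ℝ) (2*π)))) (z₀, w₀) :=
      main.differentiableAt
    rw [hFdef]
    exact hdiff.fun_const_smul ((2 * π * I : ℂ)⁻¹)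
  have hL1 : ∀ z w : ℂ, 0 < cabs z → cabs z < r →
      ρ₁ * c' < cabs w → cabs w < s → F (z, w) = g z w := by
    intro z w hz0 hzr hw1 hw2
    have hw0 : w ≠ 0 := by
      intro h0
      rw [h0] at hw1
      simp at hw1
      linarith
    have hwc' : cabs w < c' := hw2.trans hsc'
    have hzc : cabs z < c := hzr.trans hrc
    have hgwdiff : DifferentiableOn ℂ (fun ζ => g ζ w)
        {ζ : ℂ | 0 < cabs ζ ∧ cabs ζ < c} :=
      hgdiff_z w (norm_pos_iff.mpr hw0) hwc'
    have hq : DifferentiableOn ℂ (dslope (fun ζ => g ζ w) z)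
        {ζ : ℂ | 0 < cabs ζ ∧ cabs ζ < c} :=
      (differentiableOn_dslope ((hopen c).mem_nhds ⟨hz0, hzc⟩)).2 hgwdiff
    have hcont_gw : ContinuousOn (fun ζ => g ζ w)
        {ζ : ℂ | 0 < cabs ζ ∧ cabs ζ < c} := hgwdiff.continuousOn
    have hsub_r : sphere (0:ℂ) r ⊆ {ζ : ℂ | 0 < cabs ζ ∧ cabs ζ < c} := by
      intro ζ hζ
      rw [mem_sphere_zero_iff_norm] at hζ
      exact ⟨hζ ▸ hr0, hζ ▸ hrc⟩
    have hsphere_r : ∀ ζ ∈ sphere (0:ℂ) r, ζ ≠ z := by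
      intro ζ hζ h0
      rw [mem_sphere_zero_iff_norm] at hζ
      rw [h0] at hζ
      linarith
    have hi1r : CircleIntegrable (fun ζ => (ζ - z)⁻¹ • g ζ w) 0 r := by
      refine ContinuousOn.circleIntegrable hr0.le ?_
      refine ((continuousOn_id.sub continuousOn_const).inv₀ ?_).smul (hcont_gw.mono hsub_r)
      intro ζ hζ
      exact sub_ne_zero.2 (hsphere_r ζ hζ)
    have hi2r : CircleIntegrable (fun ζ => (ζ - z)⁻¹ • g z w) 0 r := by
      refine ContinuousOn.circleIntegrable hr0.le ?_
      refine ((continuousOn_id.sub continuousOn_const).inv₀ ?_).smul continuousOn_const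
      intro ζ hζ
      exact sub_ne_zero.2 (hsphere_r ζ hζ)
    have key : ∀ ε' : ℝ, 0 < ε' → ε' < cabs z →
        (∮ ζ in C(0, r), (ζ - z)⁻¹ • g ζ w) - (2 * π * I : ℂ) • g z w
          = ∮ ζ in C(0, ε'), (ζ - z)⁻¹ • g ζ w := by
      intro ε' hε'0 hε'z
      have hε'r : ε' ≤ r := (hε'z.trans hzr).le
      have hsub : closedBall (0:ℂ) r \ ball 0 ε'
          ⊆ {ζ : ℂ | 0 < cabs ζ ∧ cabs ζ < c} := by
        rintro ζ ⟨h1, h2⟩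
        rw [mem_closedBall_zero_iff] at h1
        rw [mem_ball_zero_iff] at h2
        push_neg at h2
        exact ⟨lt_of_lt_of_le hε'0 h2, lt_of_le_of_lt h1 hrc⟩
      have hann := circleIntegral_eq_of_differentiable_on_annulus_off_countable hε'0 hε'r
        countable_empty (hq.continuousOn.mono hsub)
        (fun ζ hζ => (hq.differentiableAt ((hopen c).mem_nhds (hsub
          ⟨ball_subset_closedBall hζ.1.1, fun hb => hζ.1.2 (ball_subset_closedBall hb)⟩))))
      have hsphere_ε : ∀ ζ ∈ sphere (0:ℂ) ε', ζ ≠ z := by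
        intro ζ hζ h0
        rw [mem_sphere_zero_iff_norm] at hζ
        rw [h0] at hζ
        linarith
      have hsub_ε : sphere (0:ℂ) ε' ⊆ {ζ : ℂ | 0 < cabs ζ ∧ cabs ζ < c} := by
        intro ζ hζ
        rw [mem_sphere_zero_iff_norm] at hζ
        refine ⟨hζ ▸ hε'0, ?_⟩
        rw [hζ]
        linarith
      have hi1ε : CircleIntegrable (fun ζ => (ζ - z)⁻¹ • g ζ w) 0 ε' := by
        refine ContinuousOn.circleIntegrable hε'0.le ?_
        refine ((continuousOn_id.sub continuousOn_const).inv₀ ?_).smul (hcont_gw.mono hsub_ε)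
        intro ζ hζ
        exact sub_ne_zero.2 (hsphere_ε ζ hζ)
      have hi2ε : CircleIntegrable (fun ζ => (ζ - z)⁻¹ • g z w) 0 ε' := by
        refine ContinuousOn.circleIntegrable hε'0.le ?_
        refine ((continuousOn_id.sub continuousOn_const).inv₀ ?_).smul continuousOn_const
        intro ζ hζ
        exact sub_ne_zero.2 (hsphere_ε ζ hζ)
      have hcongr_r : EqOn (dslope (fun ζ => g ζ w) z)
          (fun ζ => (ζ - z)⁻¹ • g ζ w - (ζ - z)⁻¹ • g z w) (sphere (0:ℂ) r) := by
        intro ζ hζ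
        rw [dslope_of_ne _ (hsphere_r ζ hζ), slope_def_module, smul_sub]
      have hcongr_ε : EqOn (dslope (fun ζ => g ζ w) z)
          (fun ζ => (ζ - z)⁻¹ • g ζ w - (ζ - z)⁻¹ • g z w) (sphere (0:ℂ) ε') := by
        intro ζ hζ
        rw [dslope_of_ne _ (hsphere_ε ζ hζ), slope_def_module, smul_sub]
      have e_r : (∮ ζ in C(0, r), dslope (fun ζ => g ζ w) z ζ)
          = (∮ ζ in C(0, r), (ζ - z)⁻¹ • g ζ w) - (2 * π * I : ℂ) • g z w := by
        rw [circleIntegral.integral_congr hr0.le hcongr_r,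
          circleIntegral.integral_sub hi1r hi2r]
        congr 1
        rw [circleIntegral.integral_smul_const,
          circleIntegral.integral_sub_inv_of_mem_ball
            (by rw [mem_ball_zero_iff]; exact hzr)]
      have e_ε : (∮ ζ in C(0, ε'), dslope (fun ζ => g ζ w) z ζ)
          = ∮ ζ in C(0, ε'), (ζ - z)⁻¹ • g ζ w := by
        rw [circleIntegral.integral_congr hε'0.le hcongr_ε,
          circleIntegral.integral_sub hi1ε hi2ε]
        rw [circleIntegral.integral_smul_const]
        have hz0' : (∮ ζ in C(0, ε'), (ζ - z)⁻¹) = 0 := by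
          refine Complex.circleIntegral_eq_zero_of_differentiable_on_off_countable hε'0.le
            countable_empty ?_ ?_
          · refine (continuousOn_id.sub continuousOn_const).inv₀ ?_
            intro ζ hζ
            rw [mem_closedBall_zero_iff] at hζ
            refine sub_ne_zero.2 ?_
            intro h0
            rw [id_eq] at h0
            rw [h0] at hζ
            linarith
          · intro ζ hζ
            have hζ' : cabs ζ < ε' := by
              have := hζ.1
              rw [mem_ball_zero_iff] at this
              exact this
            refine (differentiableAt_id.sub (differentiableAt_const z)).inv ?_
            refine sub_ne_zero.2 ?_
            intro h0
            rw [id_eq] at h0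
            rw [h0] at hζ'
            linarith
        rw [hz0', zero_smul, sub_zero]
      rw [← e_r, ← e_ε]
      exact hann
    have hT : (∮ ζ in C(0, r), (ζ - z)⁻¹ • g ζ w) = (2 * π * I : ℂ) • g z w := by
      have habs0 : 0 < cabs w ^ m := pow_pos (norm_pos_iff.mpr hw0) m
      set Cw : ℝ := M / cabs w ^ m with hCwdef
      have hCw0 : 0 < Cw := div_pos hM habs0
      have hno : ∀ η : ℝ, 0 < η →
          ‖(∮ ζ in C(0, r), (ζ - z)⁻¹ • g ζ w) - (2 * π * I : ℂ) • g z w‖ ≤ η := by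
        intro η hη
        have hπ0 : (0:ℝ) < π := Real.pi_pos
        set ε' : ℝ := min (cabs z / 2) (η * cabs z / (4 * π * Cw)) with hε'def
        have hε'0 : 0 < ε' := lt_min (by linarith) (by positivity)
        have hε'half : ε' ≤ cabs z / 2 := min_le_left _ _
        have hε'z : ε' < cabs z := lt_of_le_of_lt hε'half (by linarith)
        rw [key ε' hε'0 hε'z]
        have hb : ∀ ζ ∈ sphere (0:ℂ) ε',
            ‖(ζ - z)⁻¹ • g ζ w‖ ≤ (cabs z / 2)⁻¹ * Cw := by
          intro ζ hζ
          rw [mem_sphere_zero_iff_norm] at hζ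
          have hζ0 : 0 < cabs ζ := by rw [hζ]; exact hε'0
          have hζc : cabs ζ < c := by
            rw [hζ]
            calc ε' ≤ cabs z / 2 := hε'half
              _ < c := by linarith
          have hgb := hgb_w ζ w hζ0 hζc (norm_pos_iff.mpr hw0) hwc' hw1.le hw2.le
          have hden : cabs z / 2 ≤ cabs (ζ - z) := by
            have h1 : cabs z - cabs ζ ≤ cabs (z - ζ) := by
              simpa using norm_sub_norm_le z ζ
            rw [norm_sub_rev]
            rw [hζ] at h1
            linarith
          rw [norm_smul, norm_inv, ]
          have h2 : (cabs (ζ - z))⁻¹ ≤ (cabs z / 2)⁻¹ :=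
            inv_anti₀ (by linarith) hden
          have h3 : cabs (g ζ w) ≤ Cw := by rw [hCwdef]; exact hgb
          exact mul_le_mul h2 h3 (norm_nonneg _) (by positivity)
        have hnorm := circleIntegral.norm_integral_le_of_norm_le_const hε'0.le hb
        have hz0' : cabs z ≠ 0 := ne_of_gt hz0
        have h4πCw : (4 * π * Cw) ≠ 0 := by positivity
        calc ‖∮ ζ in C(0, ε'), (ζ - z)⁻¹ • g ζ w‖
            ≤ 2 * π * ε' * ((cabs z / 2)⁻¹ * Cw) := hnorm
          _ = 4 * π * Cw * ε' / cabs z := by field_simp; ring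
          _ ≤ 4 * π * Cw * (η * cabs z / (4 * π * Cw)) / cabs z := by
              gcongr
              exact min_le_right _ _
          _ = η := by field_simp
      have hle : ‖(∮ ζ in C(0, r), (ζ - z)⁻¹ • g ζ w) - (2 * π * I : ℂ) • g z w‖ ≤ 0 := by
        by_contra hlt
        push_neg at hlt
        have := hno (‖(∮ ζ in C(0, r), (ζ - z)⁻¹ • g ζ w) - (2 * π * I : ℂ) • g z w‖ / 2)
          (by linarith)
        linarith
      rw [← sub_eq_zero]
      exact norm_le_zero_iff.1 hle
    have hcongr_gt : (∮ ζ in C(0, r), (ζ - z)⁻¹ • gt ζ w)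
        = ∮ ζ in C(0, r), (ζ - z)⁻¹ • g ζ w :=
      circleIntegral.integral_congr hr0.le (fun ζ hζ => by simp [hgtdef, hw0])
    have := hFcirc (z, w)
    simp only at this
    rw [this, hcongr_gt, hT, smul_smul, inv_mul_cancel₀ Complex.two_pi_I_ne_zero, one_smul]
  have hFg : ∀ z w : ℂ, 0 < cabs z → cabs z < r →
      0 < cabs w → cabs w < s → F (z, w) = g z w := by
    intro z w hz0 hzr hw0 hws
    set U' : Set ℂ := {w : ℂ | 0 < cabs w ∧ cabs w < s} with hU'def
    have hU'open : IsOpen U' := hopen s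
    have hU'conn : IsPreconnected U' := by
      have himg : U' = (fun q : ℝ × ℝ => (q.1 : ℂ) * Complex.exp (q.2 * I)) ''
          (Ioo (0:ℝ) s ×ˢ univ) := by
        ext w'
        constructor
        · rintro ⟨hw1, hw2⟩
          refine ⟨(cabs w', Complex.arg w'), ⟨⟨hw1, hw2⟩, trivial⟩, ?_⟩
          simpa using Complex.norm_mul_exp_arg_mul_I w'
        · rintro ⟨⟨t, θ⟩, ⟨⟨ht0, hts⟩, -⟩, rfl⟩
          have h0 : ((θ : ℂ) * I).re = 0 := by simp [Complex.mul_re]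
          have habs : cabs ((t : ℂ) * Complex.exp ((θ : ℂ) * I)) = t := by
            rw [norm_mul, Complex.norm_exp, h0, Real.exp_zero, mul_one, Complex.norm_real, Real.norm_eq_abs,
              abs_of_pos ht0]
          exact ⟨by rw [habs]; exact ht0, by rw [habs]; exact hts⟩
      rw [himg]
      refine (isPreconnected_Ioo.prod isPreconnected_univ).image _ ?_
      refine Continuous.continuousOn ?_
      exact (Complex.continuous_ofReal.comp continuous_fst).mul
        (Complex.continuous_exp.comp
          ((Complex.continuous_ofReal.comp continuous_snd).mul continuous_const))
    have hφ : DifferentiableOn ℂ (fun ω => F (z, ω)) U' := by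
      intro ω hω
      have hpair : DifferentiableAt ℂ (fun ω' : ℂ => ((z, ω') : ℂ × ℂ)) ω :=
        (differentiableAt_const z).prodMk differentiableAt_id
      exact ((hFdiffAt (z, ω) hzr hω.2).comp ω hpair).differentiableWithinAt
    have hγ : DifferentiableOn ℂ (fun ω => g z ω) U' :=
      (hgdiff_w z hz0 (hzr.trans hrc)).mono (fun ω hω => ⟨hω.1, hω.2.trans hsc'⟩)
    have hAn1 := hφ.analyticOnNhd hU'open
    have hAn2 := hγ.analyticOnNhd hU'open
    set w₁ : ℂ := (((ρ₁ * c' + s) / 2 : ℝ) : ℂ) with hw₁def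
    have hw₁abs : cabs w₁ = (ρ₁ * c' + s) / 2 := by
      rw [hw₁def, Complex.norm_real, Real.norm_eq_abs, abs_of_pos (by linarith)]
    have hw₁U' : w₁ ∈ U' := ⟨by rw [hw₁abs]; linarith, by rw [hw₁abs]; linarith⟩
    have hWbopen : IsOpen {ω : ℂ | ρ₁ * c' < cabs ω ∧ cabs ω < s} :=
      (isOpen_lt continuous_const continuous_norm).inter
        (isOpen_lt continuous_norm continuous_const)
    have hev : (fun ω => F (z, ω)) =ᶠ[𝓝 w₁] fun ω => g z ω := by
      refine Filter.eventuallyEq_of_mem (hWbopen.mem_nhds ⟨?_, ?_⟩) ?_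
      · rw [hw₁abs]; linarith
      · rw [hw₁abs]; linarith
      · intro ω hω
        exact hL1 z ω hz0 hzr hω.1 hω.2
    exact hAn1.eqOn_of_preconnected_of_eventuallyEq hAn2 hU'conn hw₁U' hev ⟨hw0, hws⟩
  have hFeq : ∀ p : ℂ × ℂ,
      (0 < cabs p.1 ∧ cabs p.1 < r) →
      (0 < cabs p.2 ∧ cabs p.2 < s) → F p = p.1 ^ m * f p := by
    intro p h1 h2
    have := hFg p.1 p.2 h1.1 h1.2 h2.1 h2.2
    simpa [hgdef] using this
  refine ⟨F, ⟨fun p hp => (hFdiffAt p hp.1 hp.2).differentiableWithinAt, hFeq⟩, ?_⟩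
  · rintro G ⟨hGdiff, hGeq⟩ p hp1 hp2
    set q : ℝ → ℂ × ℂ := fun t => (p.1 + (t : ℂ), p.2 + (t : ℂ)) with hqdef
    have hqcont : Continuous q := by
      refine Continuous.prodMk ?_ ?_ <;>
        exact continuous_const.add Complex.continuous_ofReal
    have hq0 : Tendsto q (𝓝[>] (0:ℝ)) (𝓝 p) := by
      have h0 := hqcont.tendsto 0
      rw [show q 0 = p by simp [hqdef]] at h0
      exact h0.mono_left nhdsWithin_le_nhds
    have habs1 : Tendsto (fun t : ℝ => cabs (p.1 + (t : ℂ))) (𝓝[>] (0:ℝ))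
        (𝓝 (cabs p.1)) := by
      have hcont : Continuous fun t : ℝ => cabs (p.1 + (t : ℂ)) :=
        continuous_norm.comp (continuous_const.add Complex.continuous_ofReal)
      have h0 := hcont.tendsto 0
      simp only [Complex.ofReal_zero, add_zero] at h0
      exact h0.mono_left nhdsWithin_le_nhds
    have habs2 : Tendsto (fun t : ℝ => cabs (p.2 + (t : ℂ))) (𝓝[>] (0:ℝ))
        (𝓝 (cabs p.2)) := by
      have hcont : Continuous fun t : ℝ => cabs (p.2 + (t : ℂ)) :=
        continuous_norm.comp (continuous_const.add Complex.continuous_ofReal)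
      have h0 := hcont.tendsto 0
      simp only [Complex.ofReal_zero, add_zero] at h0
      exact h0.mono_left nhdsWithin_le_nhds
    have hm1 : ∀ᶠ t : ℝ in 𝓝[>] (0:ℝ), 0 < cabs (p.1 + (t : ℂ)) := by
      rcases eq_or_ne p.1 0 with h0 | h0
      · filter_upwards [self_mem_nhdsWithin] with t ht
        have ht' : (0:ℝ) < t := ht
        simp only [h0, zero_add, Complex.norm_real, Real.norm_eq_abs, abs_of_pos ht']
        exact ht'
      · exact habs1.eventually (eventually_gt_nhds (norm_pos_iff.mpr h0))
    have hm2 : ∀ᶠ t : ℝ in 𝓝[>] (0:ℝ), cabs (p.1 + (t : ℂ)) < r :=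
      habs1.eventually (eventually_lt_nhds hp1)
    have hm3 : ∀ᶠ t : ℝ in 𝓝[>] (0:ℝ), 0 < cabs (p.2 + (t : ℂ)) := by
      rcases eq_or_ne p.2 0 with h0 | h0
      · filter_upwards [self_mem_nhdsWithin] with t ht
        have ht' : (0:ℝ) < t := ht
        simp only [h0, zero_add, Complex.norm_real, Real.norm_eq_abs, abs_of_pos ht']
        exact ht'
      · exact habs2.eventually (eventually_gt_nhds (norm_pos_iff.mpr h0))
    have hm4 : ∀ᶠ t : ℝ in 𝓝[>] (0:ℝ), cabs (p.2 + (t : ℂ)) < s :=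
      habs2.eventually (eventually_lt_nhds hp2)
    have hmem : ∀ᶠ t : ℝ in 𝓝[>] (0:ℝ),
        (0 < cabs (q t).1 ∧ cabs (q t).1 < r) ∧
        (0 < cabs (q t).2 ∧ cabs (q t).2 < s) := by
      filter_upwards [hm1, hm2, hm3, hm4] with t h1 h2 h3 h4
      exact ⟨⟨h1, h2⟩, h3, h4⟩
    have heqF : ∀ᶠ t : ℝ in 𝓝[>] (0:ℝ), G (q t) = F (q t) := by
      filter_upwards [hmem] with t ht
      rw [hGeq (q t) ht.1 ht.2, hFeq (q t) ht.1 ht.2]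
    have hGt : Tendsto (fun t => G (q t)) (𝓝[>] (0:ℝ)) (𝓝 (G p)) := by
      have hc := (hGdiff.continuousOn) p ⟨hp1, hp2⟩
      refine hc.tendsto.comp ?_
      rw [tendsto_nhdsWithin_iff]
      exact ⟨hq0, hmem.mono fun t ht => ⟨ht.1.2, ht.2.2⟩⟩
    have hFt : Tendsto (fun t => F (q t)) (𝓝[>] (0:ℝ)) (𝓝 (F p)) :=
      ((hFdiffAt p hp1 hp2).continuousAt.tendsto).comp hq0
    exact tendsto_nhds_unique (Filter.Tendsto.congr' heqF hGt) hFt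
end
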